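/- arXiv:1311.1264 — 11 statements merged into one kernel-verified Lean document; each statement's English description precedes it below -/
import Mathlib

section
/- Let p₀ ∈ (0,1) and define a sequence (p_m)_{m∈ℕ} by p_{m+1} = p_m(1 − p₀)/(1 − p_m·p₀). Then p_m → 0 as m → ∞; consequently, for any real numbers f_a, f_b, c with f_b < c, there exists M such that for all m ≥ M, p_m·f_a + (1 − p_m)·f_b < c. -/
open Filter

/-- Quantitative conclusion of Proposition 4: the Bayesian posterior `p m` tends
to `0`, so the posterior expected benefit `p m * f_a + (1 - p m) * f_b` from a
link eventually falls below the cost `c` whenever `f_b < c`. -/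
theorem bayesian_posterior_tendsto_zero
    (p : ℕ → ℝ) (h0 : 0 < p 0) (h1 : p 0 < 1)
    (hrec : ∀ m : ℕ, p (m + 1) = p m * (1 - p 0) / (1 - p m * p 0)) :
    Tendsto p atTop (nhds 0) ∧
      ∀ f_a f_b c : ℝ, f_b < c →
        ∃ M : ℕ, ∀ m : ℕ, M ≤ m → p m * f_a + (1 - p m) * f_b < c := by
  have hpos1 : (0:ℝ) < 1 + p 0 := by linarith
  have key : ∀ m : ℕ, 0 ≤ p m ∧ p m ≤ p 0 * (1 / (1 + p 0)) ^ m := by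
    intro m
    induction m with
    | zero => simp [le_of_lt h0]
    | succ m ih =>
      obtain ⟨hnn, hub⟩ := ih
      have hq : p 0 * (1 / (1 + p 0)) ^ m ≤ p 0 := by
        have : (1 / (1 + p 0)) ^ m ≤ 1 :=
          pow_le_one₀ (by positivity) (by rw [div_le_one hpos1]; linarith)
        nlinarith
      have hle : p m ≤ p 0 := le_trans hub hq
      have hden : 0 < 1 - p m * p 0 := by nlinarith
      constructor
      · rw [hrec m]
        apply div_nonneg _ (le_of_lt hden)
        nlinarith
      · rw [hrec m]
        have h2 : p m * (1 - p 0) / (1 - p m * p 0) ≤ p m / (1 + p 0) := by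
          rw [div_le_div_iff₀ hden hpos1]
          nlinarith [mul_nonneg (mul_nonneg hnn h0.le) (sub_nonneg.2 hle)]
        calc p m * (1 - p 0) / (1 - p m * p 0) ≤ p m / (1 + p 0) := h2
          _ ≤ (p 0 * (1 / (1 + p 0)) ^ m) / (1 + p 0) := by gcongr
          _ = p 0 * (1 / (1 + p 0)) ^ (m + 1) := by
              rw [pow_succ, one_div]; ring
  have htend : Tendsto p atTop (nhds 0) := by
    have hq0 : (0:ℝ) ≤ 1 / (1 + p 0) := by positivity
    have hq1 : 1 / (1 + p 0) < 1 := by rw [div_lt_one hpos1]; linarith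
    have hgeo : Tendsto (fun m : ℕ => p 0 * (1 / (1 + p 0)) ^ m) atTop (nhds 0) := by
      have := (tendsto_pow_atTop_nhds_zero_of_lt_one hq0 hq1).const_mul (p 0)
      simpa using this
    exact squeeze_zero (fun m => (key m).1) (fun m => (key m).2) hgeo
  refine ⟨htend, ?_⟩
  intro f_a f_b c hbc
  have h2 : Tendsto (fun m => p m * f_a + (1 - p m) * f_b) atTop (nhds f_b) := by
    have := (htend.mul_const f_a).add ((((tendsto_const_nhds (x := (1:ℝ))).sub htend).mul_const f_b))
    simpa using this
  have := h2.eventually (eventually_lt_nhds hbc)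
  rw [eventually_atTop] at this
  exact this
end

section
/- Let G be a simple undirected graph on a finite vertex set V, let i ∈ V, let L be a set of edges of G all incident to i, and let e be an edge of G incident to i with e ∉ L. Then u_i(G − e) − u_i(G) ≥ u_i((G − L) − e) − u_i(G − L). -/
open scoped Classical

/-- Agent `i`'s payoff in network `G`: sum over agents reachable from `i` of
`δ^(dist-1) * f j`, minus `c` times `i`'s degree. -/
noncomputable def payoff {V : Type*} [Fintype V] (G : SimpleGraph V)
    (f : V → ℝ) (δ c : ℝ) (i : V) : ℝ :=
  (∑ j : V, if j ≠ i ∧ G.Reachable i j then δ ^ (G.dist i j - 1) * f j else 0)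
    - c * (G.degree i : ℝ)

section Aux

variable {V : Type*}

/-- The per-vertex reachability term in the payoff. -/
noncomputable def psi (G : SimpleGraph V) (δ : ℝ) (f : V → ℝ) (i j : V) : ℝ :=
  if j ≠ i ∧ G.Reachable i j then δ ^ (G.dist i j - 1) * f j else 0

lemma psi_nonneg {G : SimpleGraph V} {δ : ℝ} {f : V → ℝ} (hδ0 : 0 < δ)
    (hf : ∀ v, 0 < f v) (i j : V) : 0 ≤ psi G δ f i j := by
  unfold psi
  split
  · exact mul_nonneg (pow_nonneg hδ0.le _) (hf j).le
  · exact le_refl 0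

lemma dist_anti {G H : SimpleGraph V} (h : G ≤ H) {u v : V} (hr : G.Reachable u v) :
    H.dist u v ≤ G.dist u v := by
  obtain ⟨p, hp⟩ := hr.exists_walk_length_eq_dist
  calc H.dist u v ≤ (p.mapLe h).length := SimpleGraph.dist_le _
    _ = p.length := by simp
    _ = G.dist u v := hp

lemma psi_mono {G H : SimpleGraph V} (h : G ≤ H) {δ : ℝ} (hδ0 : 0 < δ) (hδ1 : δ < 1)
    {f : V → ℝ} (hf : ∀ v, 0 < f v) (i j : V) :
    psi G δ f i j ≤ psi H δ f i j := by
  unfold psi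
  by_cases hc : j ≠ i ∧ G.Reachable i j
  · rw [if_pos hc, if_pos ⟨hc.1, hc.2.mono h⟩]
    refine mul_le_mul_of_nonneg_right ?_ (hf j).le
    exact pow_le_pow_of_le_one hδ0.le hδ1.le
      (Nat.sub_le_sub_right (dist_anti h hc.2) 1)
  · rw [if_neg hc]
    exact psi_nonneg hδ0 hf i j

/-- In a path starting at `x`, all edges containing `x` coincide. -/
lemma path_edge_eq {G : SimpleGraph V} {x j : V} (q : G.Walk x j) (hq : q.IsPath)
    {a b : Sym2 V} (ha : a ∈ q.edges) (hb : b ∈ q.edges) (hxa : x ∈ a) (hxb : x ∈ b) :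
    a = b := by
  cases q with
  | nil => simp at ha
  | cons hadj r =>
    rw [SimpleGraph.Walk.cons_isPath_iff] at hq
    have key : ∀ c : Sym2 V, c ∈ r.edges → x ∉ c := by
      intro c hc hxc
      obtain ⟨u, rfl⟩ := Sym2.mem_iff_exists.mp hxc
      exact hq.2 (r.fst_mem_support_of_mem_edges hc)
    rw [SimpleGraph.Walk.edges_cons, List.mem_cons] at ha hb
    rcases ha with ha | ha
    · rcases hb with hb | hb
      · rw [ha, hb]
      · exact absurd hxb (key b hb)
    · exact absurd hxa (key a ha)

/-- Dichotomy: the payoff term in `G` is bounded by the max of the terms in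
`G - e` and in the graph where all of `i`'s edges except `e` are deleted. -/
lemma psi_dichotomy {G : SimpleGraph V} {δ : ℝ} (hδ0 : 0 < δ) (hδ1 : δ < 1)
    {f : V → ℝ} (hf : ∀ v, 0 < f v) (i j : V) (e : Sym2 V) (hei : i ∈ e) :
    psi G δ f i j ≤
      max (psi (G.deleteEdges {e}) δ f i j)
        (psi (G.deleteEdges {e' | i ∈ e' ∧ e' ≠ e}) δ f i j) := by
  by_cases hc : j ≠ i ∧ G.Reachable i j
  · obtain ⟨p, hp⟩ := hc.2.exists_walk_length_eq_dist
    set q := p.bypass with hqdef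
    have hqpath : q.IsPath := p.bypass_isPath
    have hqlen : q.length ≤ G.dist i j := hp ▸ p.length_bypass_le
    by_cases he : e ∈ q.edges
    · -- use the branch deleting all edges at i except e
      refine le_trans ?_ (le_max_right _ _)
      have hcond : ∀ e'' ∈ q.edges, e'' ∉ {e' : Sym2 V | i ∈ e' ∧ e' ≠ e} := by
        intro e'' h1 h2
        exact h2.2 (path_edge_eq q hqpath h1 he h2.1 hei)
      let q' := q.toDeleteEdges _ hcond
      have hr' : (G.deleteEdges {e' | i ∈ e' ∧ e' ≠ e}).Reachable i j := ⟨q'⟩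
      have hd' : (G.deleteEdges {e' | i ∈ e' ∧ e' ≠ e}).dist i j ≤ G.dist i j := by
        calc _ ≤ q'.length := SimpleGraph.dist_le _
          _ = q.length := SimpleGraph.Walk.length_transfer _ _
          _ ≤ _ := hqlen
      unfold psi
      rw [if_pos hc, if_pos ⟨hc.1, hr'⟩]
      exact mul_le_mul_of_nonneg_right
        (pow_le_pow_of_le_one hδ0.le hδ1.le (Nat.sub_le_sub_right hd' 1)) (hf j).le
    · -- use the branch deleting e
      refine le_trans ?_ (le_max_left _ _)
      have hcond : ∀ e'' ∈ q.edges, e'' ∉ ({e} : Set (Sym2 V)) := by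
        intro e'' h1 h2
        rw [Set.mem_singleton_iff] at h2
        exact he (h2 ▸ h1)
      let q' := q.toDeleteEdges _ hcond
      have hr' : (G.deleteEdges {e}).Reachable i j := ⟨q'⟩
      have hd' : (G.deleteEdges {e}).dist i j ≤ G.dist i j := by
        calc _ ≤ q'.length := SimpleGraph.dist_le _
          _ = q.length := SimpleGraph.Walk.length_transfer _ _
          _ ≤ _ := hqlen
      unfold psi
      rw [if_pos hc, if_pos ⟨hc.1, hr'⟩]
      exact mul_le_mul_of_nonneg_right
        (pow_le_pow_of_le_one hδ0.le hδ1.le (Nat.sub_le_sub_right hd' 1)) (hf j).le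
  · have : psi G δ f i j = 0 := if_neg hc
    rw [this]
    exact le_max_of_le_left (psi_nonneg hδ0 hf i j)

lemma degree_deleteEdge [Fintype V] {H : SimpleGraph V} {i k : V} (h : H.Adj i k) :
    ((H.deleteEdges {s(i, k)}).degree i : ℝ) = (H.degree i : ℝ) - 1 := by
  have hset : (H.deleteEdges {s(i, k)}).neighborFinset i = (H.neighborFinset i).erase k := by
    ext x
    simp only [SimpleGraph.mem_neighborFinset, SimpleGraph.deleteEdges_adj,
      Set.mem_singleton_iff, Finset.mem_erase]
    constructor
    · rintro ⟨hadj, hne⟩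
      exact ⟨fun hx => hne (by rw [hx]), hadj⟩
    · rintro ⟨hne, hadj⟩
      exact ⟨hadj, fun hx => hne (Sym2.congr_right.mp hx)⟩
  have hk : k ∈ H.neighborFinset i := (SimpleGraph.mem_neighborFinset _ _ _).mpr h
  have : (H.deleteEdges {s(i, k)}).degree i = H.degree i - 1 := by
    unfold SimpleGraph.degree
    rw [hset, Finset.card_erase_of_mem hk]
  rw [this, Nat.cast_sub (by
    have := Finset.card_pos.mpr ⟨k, hk⟩
    exact this)]
  simp

end Aux

theorem marginal_gain_monotone {V : Type*} [Fintype V] (G : SimpleGraph V)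
    (f : V → ℝ) (hf : ∀ v, 0 < f v) (δ : ℝ) (hδ0 : 0 < δ) (hδ1 : δ < 1)
    (c : ℝ) (hc : 0 < c) (i : V)
    (L : Set (Sym2 V)) (hLsub : L ⊆ G.edgeSet) (hLinc : ∀ e ∈ L, i ∈ e)
    (e : Sym2 V) (he : e ∈ G.edgeSet) (hei : i ∈ e) (heL : e ∉ L) :
    payoff (G.deleteEdges {e}) f δ c i - payoff G f δ c i ≥
      payoff ((G.deleteEdges L).deleteEdges {e}) f δ c i
        - payoff (G.deleteEdges L) f δ c i := by
  obtain ⟨k, rfl⟩ := Sym2.mem_iff_exists.mp hei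
  have hadj : G.Adj i k := he
  have hadjL : (G.deleteEdges L).Adj i k := by
    rw [SimpleGraph.deleteEdges_adj]
    exact ⟨hadj, heL⟩
  -- graph inclusions
  have hle1 : (G.deleteEdges L).deleteEdges {s(i, k)} ≤ G.deleteEdges {s(i, k)} := by
    intro a b hab
    simp only [SimpleGraph.deleteEdges_adj] at hab ⊢
    exact ⟨hab.1.1, hab.2⟩
  have hle2 : (G.deleteEdges L).deleteEdges {s(i, k)} ≤ G.deleteEdges L :=
    SimpleGraph.deleteEdges_le _
  have hle3 : G.deleteEdges {e' | i ∈ e' ∧ e' ≠ s(i, k)} ≤ G.deleteEdges L := by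
    intro a b hab
    simp only [SimpleGraph.deleteEdges_adj, Set.mem_setOf_eq] at hab ⊢
    refine ⟨hab.1, fun hmem => hab.2 ⟨hLinc _ hmem, fun heq => heL (heq ▸ hmem)⟩⟩
  -- pointwise inequality on psi
  have hpt : ∀ j : V,
      psi G δ f i j + psi ((G.deleteEdges L).deleteEdges {s(i, k)}) δ f i j ≤
      psi (G.deleteEdges {s(i, k)}) δ f i j + psi (G.deleteEdges L) δ f i j := by
    intro j
    rcases le_max_iff.mp (psi_dichotomy hδ0 hδ1 hf i j s(i, k) (Sym2.mem_mk_left i k)) with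
      h | h
    · exact add_le_add h (psi_mono hle2 hδ0 hδ1 hf i j)
    · have h1 : psi G δ f i j ≤ psi (G.deleteEdges L) δ f i j :=
        le_trans h (psi_mono hle3 hδ0 hδ1 hf i j)
      have h2 := psi_mono hle1 hδ0 hδ1 hf i j
      linarith
  have hsum : (∑ j, psi G δ f i j) + ∑ j, psi ((G.deleteEdges L).deleteEdges {s(i, k)}) δ f i j
      ≤ (∑ j, psi (G.deleteEdges {s(i, k)}) δ f i j) + ∑ j, psi (G.deleteEdges L) δ f i j := by
    rw [← Finset.sum_add_distrib, ← Finset.sum_add_distrib]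
    exact Finset.sum_le_sum fun j _ => hpt j
  have hdeg1 := degree_deleteEdge (V := V) hadj
  have hdeg2 := degree_deleteEdge (V := V) hadjL
  have hpay : ∀ (H : SimpleGraph V), payoff H f δ c i = (∑ j, psi H δ f i j) - c * (H.degree i : ℝ) :=
    fun H => by unfold payoff psi; congr!
  have hdeg1' : ∀ H H' : SimpleGraph V, H = G.deleteEdges {s(i, k)} → H' = G →
      (H.degree i : ℝ) = (H'.degree i : ℝ) - 1 := by
    rintro H H' rfl rfl
    convert hdeg1
  have hdeg2' : ∀ H H' : SimpleGraph V, H = (G.deleteEdges L).deleteEdges {s(i, k)} →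
      H' = G.deleteEdges L → (H.degree i : ℝ) = (H'.degree i : ℝ) - 1 := by
    rintro H H' rfl rfl
    convert hdeg2
  rw [ge_iff_le, hpay, hpay, hpay, hpay, hdeg1' _ _ rfl rfl, hdeg2' _ _ rfl rfl]
  linarith
end

section
/- Let G be a simple undirected graph on a finite vertex set V and let i ∈ V. Suppose that for every edge e of G incident to i, u_i(G) ≥ u_i(G − e). Then for every set L of edges of G all incident to i, u_i(G) ≥ u_i(G − L). -/
open scoped Classical

section Aux

variable {V : Type*} [Fintype V]

/-- The benefit agent `i` derives from agent `j`. -/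
noncomputable def bene (G : SimpleGraph V) (f : V → ℝ) (δ : ℝ) (i j : V) : ℝ :=
  if j ≠ i ∧ G.Reachable i j then δ ^ (G.dist i j - 1) * f j else 0

lemma payoff_eq_bene (G : SimpleGraph V) (f : V → ℝ) (δ c : ℝ) (i : V) :
    payoff G f δ c i = (∑ j : V, bene G f δ i j) - c * (G.degree i : ℝ) := rfl

lemma bene_nonneg {G : SimpleGraph V} {f : V → ℝ} (hf : ∀ v, 0 < f v) {δ : ℝ}
    (hδ0 : 0 < δ) (i j : V) : 0 ≤ bene G f δ i j := by
  unfold bene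
  split
  · exact mul_nonneg (pow_nonneg hδ0.le _) (hf _).le
  · exact le_rfl

set_option linter.unusedSectionVars false in
lemma dist_le_of_le {H G : SimpleGraph V} (h : H ≤ G) {i j : V}
    (hr : H.Reachable i j) : G.dist i j ≤ H.dist i j := by
  obtain ⟨p, hp⟩ := hr.exists_walk_length_eq_dist
  calc G.dist i j ≤ (p.mapLe h).length := SimpleGraph.dist_le _
    _ = p.length := by simp [SimpleGraph.Walk.mapLe]
    _ = H.dist i j := hp

lemma bene_le {H G : SimpleGraph V} (h : H ≤ G) {f : V → ℝ} (hf : ∀ v, 0 < f v)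
    {δ : ℝ} (hδ0 : 0 < δ) (hδ1 : δ < 1) (i j : V) :
    bene H f δ i j ≤ bene G f δ i j := by
  unfold bene
  by_cases hc : j ≠ i ∧ H.Reachable i j
  · rw [if_pos hc, if_pos ⟨hc.1, hc.2.mono h⟩]
    have hd : G.dist i j ≤ H.dist i j := dist_le_of_le h hc.2
    have := pow_le_pow_of_le_one hδ0.le hδ1.le (Nat.sub_le_sub_right hd 1)
    exact mul_le_mul_of_nonneg_right this (hf j).le
  · rw [if_neg hc]
    exact bene_nonneg hf hδ0 i j

set_option linter.unusedSectionVars false in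
lemma deleteEdges_mono_set {G : SimpleGraph V} {s t : Set (Sym2 V)} (h : s ⊆ t) :
    G.deleteEdges t ≤ G.deleteEdges s := by
  intro a b hab
  rw [SimpleGraph.deleteEdges_adj] at hab ⊢
  exact ⟨hab.1, fun hm => hab.2 (h hm)⟩

/-- If `j` is reachable from `i`, there is a "first neighbor" `k` on some shortest
path such that deleting any edge at `i` other than `s(i,k)` does not change the
benefit from `j`. -/
lemma bene_delete_or {G : SimpleGraph V} {f : V → ℝ} (hf : ∀ v, 0 < f v) {δ : ℝ}
    (hδ0 : 0 < δ) (hδ1 : δ < 1) {i : V} (e e' : Sym2 V)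
    (hie : i ∈ e) (hie' : i ∈ e') (hne : e ≠ e') (j : V) :
    bene (G.deleteEdges {e}) f δ i j = bene G f δ i j ∨
    bene (G.deleteEdges {e'}) f δ i j = bene G f δ i j := by
  by_cases hcond : j ≠ i ∧ G.Reachable i j
  · obtain ⟨hj, hr⟩ := hcond
    obtain ⟨p, hp⟩ := hr.exists_walk_length_eq_dist
    cases p with
    | nil => exact absurd rfl hj
    | @cons _ k _ hadj q =>
      -- `i` does not appear in the tail `q`.
      have hiq : i ∉ q.support := by
        intro hi
        have h1 : G.dist i j ≤ (q.dropUntil i hi).length := SimpleGraph.dist_le _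
        have h2 : (q.dropUntil i hi).length ≤ q.length :=
          SimpleGraph.Walk.length_dropUntil_le q hi
        simp only [SimpleGraph.Walk.length_cons] at hp
        omega
      have hgen : ∀ d : Sym2 V, i ∈ d → d ≠ s(i, k) →
          bene (G.deleteEdges {d}) f δ i j = bene G f δ i j := by
        intro d hid hdk
        have hdp : d ∉ (SimpleGraph.Walk.cons hadj q).edges := by
          rw [SimpleGraph.Walk.edges_cons]
          intro hmem
          rcases List.mem_cons.mp hmem with h1 | h2
          · exact hdk h1
          · obtain ⟨x, rfl⟩ := Sym2.mem_iff_exists.mp hid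
            exact hiq (SimpleGraph.Walk.fst_mem_support_of_mem_edges q h2)
        have hsub : ∀ a ∈ (SimpleGraph.Walk.cons hadj q).edges,
            a ∈ (G.deleteEdges {d}).edgeSet := by
          intro a ha
          rw [SimpleGraph.edgeSet_deleteEdges]
          refine ⟨(SimpleGraph.Walk.cons hadj q).edges_subset_edgeSet ha, ?_⟩
          simp only [Set.mem_singleton_iff]
          rintro rfl
          exact hdp ha
        set p' := (SimpleGraph.Walk.cons hadj q).transfer (G.deleteEdges {d}) hsub with hp'
        have hr' : (G.deleteEdges {d}).Reachable i j := ⟨p'⟩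
        have hd1 : (G.deleteEdges {d}).dist i j ≤ G.dist i j := by
          calc (G.deleteEdges {d}).dist i j ≤ p'.length := SimpleGraph.dist_le _
            _ = (SimpleGraph.Walk.cons hadj q).length := SimpleGraph.Walk.length_transfer _ _
            _ = G.dist i j := hp
        have hd2 : G.dist i j ≤ (G.deleteEdges {d}).dist i j :=
          dist_le_of_le (SimpleGraph.deleteEdges_le _) hr'
        have hdist : (G.deleteEdges {d}).dist i j = G.dist i j := le_antisymm hd1 hd2
        unfold bene
        rw [if_pos ⟨hj, hr'⟩, if_pos ⟨hj, hr⟩, hdist]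
      by_cases hek : e = s(i, k)
      · right
        exact hgen e' hie' (fun h => hne (hek.trans h.symm))
      · left
        exact hgen e hie hek
  · left
    have h1 : bene G f δ i j = 0 := if_neg hcond
    have h2 : bene (G.deleteEdges {e}) f δ i j = 0 := by
      apply if_neg
      rintro ⟨hj, hr⟩
      exact hcond ⟨hj, hr.mono (SimpleGraph.deleteEdges_le _)⟩
    rw [h1, h2]

set_option linter.unusedSectionVars false in
lemma degree_deleteEdges_add {G : SimpleGraph V} {i : V} (L : Set (Sym2 V))
    (hL : L ⊆ G.edgeSet) (hLi : ∀ e ∈ L, i ∈ e) :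
    (G.deleteEdges L).degree i + L.ncard = G.degree i := by
  classical
  rw [Set.ncard_eq_toFinset_card' L]
  have hNB : (G.deleteEdges L).neighborFinset i =
      (G.neighborFinset i).filter (fun v => s(i, v) ∉ L) := by
    ext v
    simp [SimpleGraph.mem_neighborFinset, SimpleGraph.deleteEdges_adj]
  have hcard : ((G.neighborFinset i).filter (fun v => s(i, v) ∈ L)).card
      = L.toFinset.card := by
    apply Finset.card_bij (fun v _ => s(i, v))
    · intro v hv
      rw [Set.mem_toFinset]
      exact (Finset.mem_filter.mp hv).2
    · intro a ha b hb hab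
      exact (Sym2.congr_right).mp hab
    · intro e he
      rw [Set.mem_toFinset] at he
      obtain ⟨x, rfl⟩ := Sym2.mem_iff_exists.mp (hLi e he)
      refine ⟨x, ?_, rfl⟩
      rw [Finset.mem_filter]
      exact ⟨by rw [SimpleGraph.mem_neighborFinset]; exact (G.mem_edgeSet).mp (hL he), he⟩
  rw [SimpleGraph.degree, SimpleGraph.degree, hNB, ← hcard]
  rw [add_comm]
  exact Finset.card_filter_add_card_filter_not _

end Aux

theorem no_single_severance_implies_no_multi_severance
    {V : Type*} [Fintype V] (G : SimpleGraph V)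
    (f : V → ℝ) (hf : ∀ v, 0 < f v) (δ : ℝ) (hδ0 : 0 < δ) (hδ1 : δ < 1)
    (c : ℝ) (hc : 0 < c) (i : V)
    (hsingle : ∀ e ∈ G.edgeSet, i ∈ e →
      payoff G f δ c i ≥ payoff (G.deleteEdges {e}) f δ c i) :
    ∀ L : Set (Sym2 V), L ⊆ G.edgeSet → (∀ e ∈ L, i ∈ e) →
      payoff G f δ c i ≥ payoff (G.deleteEdges L) f δ c i := by
  intro L hL hLi
  set T : Finset (Sym2 V) := L.toFinset with hT
  have hmemT : ∀ e, e ∈ T ↔ e ∈ L := fun e => Set.mem_toFinset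
  -- Single-edge consequence, in benefit form.
  have hsingle' : ∀ e ∈ T, c ≤ ∑ j : V, (bene G f δ i j - bene (G.deleteEdges {e}) f δ i j) := by
    intro e heT
    have heL : e ∈ L := (hmemT e).mp heT
    have hpay := hsingle e (hL heL) (hLi e heL)
    have hdeg : (G.deleteEdges {e}).degree i + ({e} : Set (Sym2 V)).ncard
        = G.degree i :=
      by convert degree_deleteEdges_add {e} (by simpa using hL heL) (by simpa using hLi e heL) using 3
    rw [Set.ncard_singleton] at hdeg
    rw [payoff_eq_bene, payoff_eq_bene, ge_iff_le] at hpay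
    have hdegR : ((G.deleteEdges {e}).degree i : ℝ) + 1 = (G.degree i : ℝ) := by
      exact_mod_cast congrArg (Nat.cast : ℕ → ℝ) hdeg
    have h3 : c * (G.degree i : ℝ) = c * ((G.deleteEdges {e}).degree i : ℝ) + c := by
      rw [← hdegR]; ring
    rw [Finset.sum_sub_distrib]
    have h6 : (∑ j, bene (G.deleteEdges {e}) f δ i j) - c * ((G.deleteEdges {e}).degree i : ℝ)
        ≤ (∑ j, bene G f δ i j) - c * (G.degree i : ℝ) := by convert hpay using 6
    linarith
  -- Per-vertex superadditivity.
  have hkey : ∀ j : V, ∑ e ∈ T, (bene G f δ i j - bene (G.deleteEdges {e}) f δ i j)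
      ≤ bene G f δ i j - bene (G.deleteEdges L) f δ i j := by
    intro j
    have hmonoL : bene (G.deleteEdges L) f δ i j ≤ bene G f δ i j :=
      bene_le (SimpleGraph.deleteEdges_le _) hf hδ0 hδ1 i j
    by_cases hex : ∃ e₀ ∈ T, bene (G.deleteEdges {e₀}) f δ i j ≠ bene G f δ i j
    · obtain ⟨e₀, he₀T, hne0⟩ := hex
      rw [Finset.sum_eq_single_of_mem e₀ he₀T ?_]
      · have h1 : bene (G.deleteEdges L) f δ i j ≤ bene (G.deleteEdges {e₀}) f δ i j := by
          apply bene_le _ hf hδ0 hδ1 i j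
          exact deleteEdges_mono_set (by simpa using (hmemT e₀).mp he₀T)
        linarith
      · intro e heT hnee0
        rcases bene_delete_or hf hδ0 hδ1 e e₀ (hLi e ((hmemT e).mp heT))
          (hLi e₀ ((hmemT e₀).mp he₀T)) hnee0 j with h | h
        · rw [h]; ring
        · exact absurd h hne0
    · push_neg at hex
      have : ∑ e ∈ T, (bene G f δ i j - bene (G.deleteEdges {e}) f δ i j) = 0 :=
        Finset.sum_eq_zero fun e heT => by rw [hex e heT]; ring
      rw [this]
      linarith
  -- Sum everything up.
  have hsum : c * (T.card : ℝ) ≤ ∑ j : V, (bene G f δ i j - bene (G.deleteEdges L) f δ i j) := by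
    calc c * (T.card : ℝ) = ∑ _e ∈ T, c := by rw [Finset.sum_const, nsmul_eq_mul, mul_comm]
      _ ≤ ∑ e ∈ T, ∑ j : V, (bene G f δ i j - bene (G.deleteEdges {e}) f δ i j) :=
          Finset.sum_le_sum hsingle'
      _ = ∑ j : V, ∑ e ∈ T, (bene G f δ i j - bene (G.deleteEdges {e}) f δ i j) :=
          Finset.sum_comm
      _ ≤ ∑ j : V, (bene G f δ i j - bene (G.deleteEdges L) f δ i j) :=
          Finset.sum_le_sum fun j _ => hkey j
  have hdeg : (G.deleteEdges L).degree i + T.card = G.degree i := by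
    have := degree_deleteEdges_add L hL hLi
    rwa [Set.ncard_eq_toFinset_card' L] at this
  have hdegR : ((G.deleteEdges L).degree i : ℝ) + (T.card : ℝ) = (G.degree i : ℝ) := by
    exact_mod_cast congrArg (Nat.cast : ℕ → ℝ) hdeg
  rw [payoff_eq_bene, payoff_eq_bene, ge_iff_le]
  have h3 : c * (G.degree i : ℝ) = c * ((G.deleteEdges L).degree i : ℝ) + c * (T.card : ℝ) := by
    rw [← hdegR]; ring
  rw [Finset.sum_sub_distrib] at hsum
  suffices h7 : (∑ j, bene (G.deleteEdges L) f δ i j) - c * ((G.deleteEdges L).degree i : ℝ)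
      ≤ (∑ j, bene G f δ i j) - c * (G.degree i : ℝ) by convert h7 using 6
  linarith
end

section
/- Let G and G' be simple undirected graphs on the same finite vertex set V with G a subgraph of G' (every edge of G is an edge of G'). Let i ∈ V and suppose the edges of G incident to i are exactly the edges of G' incident to i. Then u_i(G) ≤ u_i(G'). -/
open scoped Classical

theorem payoff_mono_of_same_incident_edges
    {V : Type*} [Fintype V] (G G' : SimpleGraph V) (hsub : G ≤ G')
    (f : V → ℝ) (hf : ∀ v, 0 < f v) (δ : ℝ) (hδ0 : 0 < δ) (hδ1 : δ < 1)
    (c : ℝ) (hc : 0 < c) (i : V)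
    (hinc : {e ∈ G.edgeSet | i ∈ e} = {e ∈ G'.edgeSet | i ∈ e}) :
    payoff G f δ c i ≤ payoff G' f δ c i := by
  have hadj : ∀ j, G.Adj i j ↔ G'.Adj i j := by
    intro j
    constructor
    · intro h; exact hsub h
    · intro h
      have : (s(i, j) : Sym2 V) ∈ {e ∈ G.edgeSet | i ∈ e} := by
        rw [hinc]
        exact ⟨h, Sym2.mem_mk_left i j⟩
      exact this.1
  have hdeg : G.degree i = G'.degree i := by
    unfold SimpleGraph.degree
    congr 1
    ext j
    simp [SimpleGraph.mem_neighborFinset, hadj j]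
  unfold payoff
  rw [hdeg]
  apply sub_le_sub_right
  apply Finset.sum_le_sum
  intro j _
  by_cases h : j ≠ i ∧ G.Reachable i j
  · have hr' : G'.Reachable i j := h.2.mono hsub
    rw [if_pos h, if_pos ⟨h.1, hr'⟩]
    have hd : G'.dist i j ≤ G.dist i j := by
      obtain ⟨p, hp⟩ := h.2.exists_walk_length_eq_dist
      calc G'.dist i j ≤ (p.mapLe hsub).length := SimpleGraph.dist_le _
        _ = G.dist i j := by simp [hp]
    have := pow_le_pow_of_le_one hδ0.le hδ1.le (Nat.sub_le_sub_right hd 1)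
    exact mul_le_mul_of_nonneg_right this (hf j).le
  · rw [if_neg h]
    split
    · exact mul_nonneg (pow_nonneg hδ0.le _) (hf j).le
    · exact le_refl _
end

section
/- Let G₁ and G₂ be simple undirected graphs on the same finite vertex set V with G₂ a subgraph of G₁. If G₁ is severance-proof, then u_i(G₁) ≥ u_i(G₂) for every vertex i, and consequently Σ_{i∈V} u_i(G₁) ≥ Σ_{i∈V} u_i(G₂). -/
open scoped Classical

/-- `G` is severance-proof: no agent can strictly gain by severing one of its own links. -/
def SeveranceProof {V : Type*} [Fintype V] (G : SimpleGraph V)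
    (f : V → ℝ) (δ c : ℝ) : Prop :=
  ∀ i : V, ∀ e ∈ G.edgeSet, i ∈ e →
    payoff G f δ c i ≥ payoff (G.deleteEdges {e}) f δ c i

namespace SevAux

variable {V : Type*} [Fintype V]

/-- The gross benefit term of agent `i` from agent `j`. -/
noncomputable def bterm (G : SimpleGraph V) (f : V → ℝ) (δ : ℝ) (i j : V) : ℝ :=
  if j ≠ i ∧ G.Reachable i j then δ ^ (G.dist i j - 1) * f j else 0

lemma payoff_eq (G : SimpleGraph V) (f : V → ℝ) (δ c : ℝ) (i : V) :
    payoff G f δ c i = (∑ j : V, bterm G f δ i j) - c * (G.degree i : ℝ) := rfl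

lemma dist_mono {G H : SimpleGraph V} (h : H ≤ G) {i j : V} (hr : H.Reachable i j) :
    G.dist i j ≤ H.dist i j := by
  obtain ⟨p, hp⟩ := hr.exists_walk_length_eq_dist
  calc G.dist i j ≤ (p.mapLe h).length := SimpleGraph.dist_le _
    _ = p.length := by
        simpa using SimpleGraph.Walk.length_map (p := p)
          (f := SimpleGraph.Hom.mapSpanningSubgraphs h)
    _ = H.dist i j := hp

lemma bterm_nonneg (G : SimpleGraph V) {f : V → ℝ} (hf : ∀ v, 0 < f v) {δ : ℝ}
    (hδ0 : 0 < δ) (i j : V) : 0 ≤ bterm G f δ i j := by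
  unfold bterm
  split
  · exact mul_nonneg (pow_nonneg hδ0.le _) (hf j).le
  · exact le_refl 0

lemma bterm_mono {G H : SimpleGraph V} (h : H ≤ G) {f : V → ℝ} (hf : ∀ v, 0 < f v)
    {δ : ℝ} (hδ0 : 0 < δ) (hδ1 : δ < 1) (i j : V) :
    bterm H f δ i j ≤ bterm G f δ i j := by
  unfold bterm
  by_cases hc : j ≠ i ∧ H.Reachable i j
  · rw [if_pos hc, if_pos ⟨hc.1, hc.2.mono h⟩]
    refine mul_le_mul_of_nonneg_right ?_ (hf j).le
    exact pow_le_pow_of_le_one hδ0.le hδ1.le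
      (Nat.sub_le_sub_right (dist_mono h hc.2) 1)
  · rw [if_neg hc]
    exact bterm_nonneg G hf hδ0 i j

lemma mem_support_of_mem_edges {G : SimpleGraph V} {u a b : V} (p : G.Walk a b)
    {e : Sym2 V} (he : e ∈ p.edges) (hu : u ∈ e) : u ∈ p.support := by
  induction e using Sym2.ind with
  | _ x y =>
    rcases Sym2.mem_iff.mp hu with rfl | rfl
    · exact p.fst_mem_support_of_mem_edges he
    · exact p.snd_mem_support_of_mem_edges he

lemma le_del {G₁ G₂ : SimpleGraph V} (hsub : G₂ ≤ G₁) {e : Sym2 V}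
    (he : e ∉ G₂.edgeSet) : G₂ ≤ G₁.deleteEdges {e} := by
  intro a b hab
  rw [SimpleGraph.deleteEdges_adj]
  refine ⟨hsub hab, fun hmem => he ?_⟩
  rw [Set.mem_singleton_iff] at hmem
  rw [← hmem]
  exact hab

/-- Key combinatorial lemma: for a fixed `j`, the sum over a set of edges `E`, all
incident to `i` in `G₁` and absent from `G₂`, of the benefit losses from single-edge
deletions, is at most the total benefit loss from `G₁` to `G₂`. -/
lemma key (G₁ G₂ : SimpleGraph V) (hsub : G₂ ≤ G₁) {f : V → ℝ} (hf : ∀ v, 0 < f v)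
    {δ : ℝ} (hδ0 : 0 < δ) (hδ1 : δ < 1) (i j : V) (E : Finset (Sym2 V))
    (hE : ∀ e ∈ E, e ∈ G₁.incidenceSet i ∧ e ∉ G₂.edgeSet) :
    ∑ e ∈ E, (bterm G₁ f δ i j - bterm (G₁.deleteEdges {e}) f δ i j)
      ≤ bterm G₁ f δ i j - bterm G₂ f δ i j := by
  by_cases hcond : j ≠ i ∧ G₁.Reachable i j
  · obtain ⟨hji, hreach⟩ := hcond
    obtain ⟨p, hpath, hlen⟩ := hreach.exists_path_of_dist
    cases p with
    | nil => exact absurd rfl hji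
    | @cons _ x _ ha q =>
      -- the first edge of the path
      set p : G₁.Walk i j := SimpleGraph.Walk.cons ha q with hp
      have hfirst : ∀ e ∈ E, e ≠ s(i, x) →
          bterm (G₁.deleteEdges {e}) f δ i j = bterm G₁ f δ i j := by
        intro e heE hne
        have hie : i ∈ e := (hE e heE).1.2
        have hnotin : e ∉ p.edges := by
          rw [hp, SimpleGraph.Walk.edges_cons]
          intro hmem'
          rcases List.mem_cons.mp hmem' with h | h
          · exact hne (by simpa using h)
          · have hi : i ∈ q.support := mem_support_of_mem_edges q h hie
            have := (SimpleGraph.Walk.cons_isPath_iff ha q).mp hpath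
            exact this.2 hi
        have hall : ∀ e' ∈ p.edges, e' ∉ ({e} : Set (Sym2 V)) := by
          intro e' he' hmem
          rw [Set.mem_singleton_iff] at hmem
          exact hnotin (hmem ▸ he')
        have hdreach : (G₁.deleteEdges {e}).Reachable i j :=
          ⟨p.toDeleteEdges {e} hall⟩
        have hle : (G₁.deleteEdges {e}).dist i j ≤ G₁.dist i j := by
          calc (G₁.deleteEdges {e}).dist i j ≤ (p.toDeleteEdges {e} hall).length :=
                SimpleGraph.dist_le _
            _ = p.length := SimpleGraph.Walk.length_transfer _ _
            _ = G₁.dist i j := hlen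
        have hge : G₁.dist i j ≤ (G₁.deleteEdges {e}).dist i j :=
          dist_mono (SimpleGraph.deleteEdges_le {e}) hdreach
        have hdist : (G₁.deleteEdges {e}).dist i j = G₁.dist i j :=
          le_antisymm hle hge
        unfold bterm
        rw [if_pos ⟨hji, hdreach⟩, if_pos ⟨hji, hreach⟩, hdist]
      by_cases hmem : s(i, x) ∈ E
      · rw [Finset.sum_eq_single_of_mem _ hmem
          (fun e heE hne => by rw [hfirst e heE hne]; ring)]
        have hb : bterm G₂ f δ i j ≤ bterm (G₁.deleteEdges {s(i, x)}) f δ i j :=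
          bterm_mono (le_del hsub (hE _ hmem).2) hf hδ0 hδ1 i j
        linarith
      · rw [Finset.sum_eq_zero
          (fun e heE => by
            rw [hfirst e heE (fun h => hmem (h ▸ heE))]; ring)]
        have := bterm_mono hsub hf hδ0 hδ1 (δ := δ) (f := f) i j
        linarith
  · have hz : ∀ G' : SimpleGraph V, G' ≤ G₁ → bterm G' f δ i j = 0 := by
      intro G' hG'
      unfold bterm
      rw [if_neg]
      rintro ⟨h1, h2⟩
      exact hcond ⟨h1, h2.mono hG'⟩
    have h1 : bterm G₁ f δ i j = 0 := hz G₁ le_rfl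
    rw [h1, hz G₂ hsub, sub_zero]
    rw [Finset.sum_eq_zero (fun e heE => by
      rw [hz (G₁.deleteEdges {e}) (SimpleGraph.deleteEdges_le {e})]; ring)]

lemma degree_deleteEdges {G : SimpleGraph V} {i : V} {e : Sym2 V}
    (he : e ∈ G.incidenceSet i) :
    ((G.deleteEdges {e}).degree i : ℝ) = (G.degree i : ℝ) - 1 := by
  classical
  obtain ⟨hedge, hie⟩ := he
  -- find w with e = s(i, w) and G.Adj i w
  obtain ⟨w, rfl, hadj⟩ : ∃ w, e = s(i, w) ∧ G.Adj i w := by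
    induction e using Sym2.ind with
    | _ a b =>
      rw [SimpleGraph.mem_edgeSet] at hedge
      rcases Sym2.mem_iff.mp hie with rfl | rfl
      · exact ⟨b, rfl, hedge⟩
      · exact ⟨a, Sym2.eq_swap, hedge.symm⟩
  have hnb : (G.deleteEdges {s(i, w)}).neighborFinset i = (G.neighborFinset i).erase w := by
    ext y
    simp only [SimpleGraph.mem_neighborFinset, SimpleGraph.deleteEdges_adj,
      Set.mem_singleton_iff, Finset.mem_erase, Sym2.congr_right]
    tauto
  have hw : w ∈ G.neighborFinset i := (SimpleGraph.mem_neighborFinset G i w).mpr hadj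
  have : (G.deleteEdges {s(i, w)}).degree i = G.degree i - 1 := by
    rw [SimpleGraph.degree, SimpleGraph.degree, hnb, Finset.card_erase_of_mem hw]
  rw [this, Nat.cast_sub]
  · simp
  · exact Finset.card_pos.mpr ⟨w, hw⟩

end SevAux

theorem severanceProof_superset_payoff_ge
    {V : Type*} [Fintype V] (G₁ G₂ : SimpleGraph V) (hsub : G₂ ≤ G₁)
    (f : V → ℝ) (hf : ∀ v, 0 < f v) (δ : ℝ) (hδ0 : 0 < δ) (hδ1 : δ < 1)
    (c : ℝ) (hc : 0 < c)
    (hstable : SeveranceProof G₁ f δ c) :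
    (∀ i : V, payoff G₁ f δ c i ≥ payoff G₂ f δ c i) ∧
      ∑ i : V, payoff G₁ f δ c i ≥ ∑ i : V, payoff G₂ f δ c i := by
  classical
  have main : ∀ i : V, payoff G₁ f δ c i ≥ payoff G₂ f δ c i := by
    intro i
    set E : Finset (Sym2 V) := G₁.incidenceFinset i \ G₂.incidenceFinset i with hEdef
    have hE : ∀ e ∈ E, e ∈ G₁.incidenceSet i ∧ e ∉ G₂.edgeSet := by
      intro e he
      rw [hEdef, Finset.mem_sdiff] at he
      have h1 : e ∈ G₁.incidenceSet i := (G₁.mem_incidenceFinset i e).mp he.1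
      refine ⟨h1, fun h2 => he.2 ?_⟩
      exact (G₂.mem_incidenceFinset i e).mpr ⟨h2, h1.2⟩
    -- incidence finsets are nested
    have hInc : G₂.incidenceFinset i ⊆ G₁.incidenceFinset i := by
      intro e he
      rw [G₂.mem_incidenceFinset i] at he
      rw [G₁.mem_incidenceFinset i]
      exact ⟨SimpleGraph.edgeSet_mono hsub he.1, he.2⟩
    have hcard : E.card = G₁.degree i - G₂.degree i := by
      rw [hEdef, Finset.card_sdiff_of_subset hInc, SimpleGraph.card_incidenceFinset_eq_degree,
        SimpleGraph.card_incidenceFinset_eq_degree]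
    have hdegle : G₂.degree i ≤ G₁.degree i := by
      rw [← SimpleGraph.card_incidenceFinset_eq_degree, ← SimpleGraph.card_incidenceFinset_eq_degree]
      exact Finset.card_le_card hInc
    have hcardR : (E.card : ℝ) = (G₁.degree i : ℝ) - (G₂.degree i : ℝ) := by
      rw [hcard, Nat.cast_sub hdegle]
    -- severance-proofness: each deleted incident edge was worth at least c
    have hsev : ∀ e ∈ E, c ≤ (∑ j : V, SevAux.bterm G₁ f δ i j)
        - (∑ j : V, SevAux.bterm (G₁.deleteEdges {e}) f δ i j) := by
      intro e he
      have h1 := hstable i e (hE e he).1.1 (hE e he).1.2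
      rw [SevAux.payoff_eq, SevAux.payoff_eq] at h1
      have h2 := SevAux.degree_deleteEdges (G := G₁) (i := i) (e := e) (hE e he).1
      have h3 : ∀ inst : Fintype ((G₁.deleteEdges {e}).neighborSet i),
          (@SimpleGraph.degree V (G₁.deleteEdges {e}) i inst : ℝ) = (G₁.degree i : ℝ) - 1 :=
        fun inst => by convert h2
      rw [h3] at h1
      linarith
    -- key lemma summed over j
    have hkey : ∑ e ∈ E, ((∑ j : V, SevAux.bterm G₁ f δ i j)
        - (∑ j : V, SevAux.bterm (G₁.deleteEdges {e}) f δ i j))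
        ≤ (∑ j : V, SevAux.bterm G₁ f δ i j) - (∑ j : V, SevAux.bterm G₂ f δ i j) := by
      calc ∑ e ∈ E, ((∑ j : V, SevAux.bterm G₁ f δ i j)
              - (∑ j : V, SevAux.bterm (G₁.deleteEdges {e}) f δ i j))
          = ∑ e ∈ E, ∑ j : V, (SevAux.bterm G₁ f δ i j
              - SevAux.bterm (G₁.deleteEdges {e}) f δ i j) := by
            refine Finset.sum_congr rfl fun e _ => ?_
            rw [Finset.sum_sub_distrib]
        _ = ∑ j : V, ∑ e ∈ E, (SevAux.bterm G₁ f δ i j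
              - SevAux.bterm (G₁.deleteEdges {e}) f δ i j) := Finset.sum_comm
        _ ≤ ∑ j : V, (SevAux.bterm G₁ f δ i j - SevAux.bterm G₂ f δ i j) :=
            Finset.sum_le_sum fun j _ =>
              SevAux.key G₁ G₂ hsub hf hδ0 hδ1 i j E hE
        _ = (∑ j : V, SevAux.bterm G₁ f δ i j) - (∑ j : V, SevAux.bterm G₂ f δ i j) := by
            rw [Finset.sum_sub_distrib]
    have hlow : c * (E.card : ℝ) ≤ ∑ e ∈ E, ((∑ j : V, SevAux.bterm G₁ f δ i j)
        - (∑ j : V, SevAux.bterm (G₁.deleteEdges {e}) f δ i j)) := by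
      calc c * (E.card : ℝ) = ∑ _e ∈ E, c := by
            rw [Finset.sum_const, nsmul_eq_mul, mul_comm]
        _ ≤ _ := Finset.sum_le_sum hsev
    rw [ge_iff_le, SevAux.payoff_eq, SevAux.payoff_eq]
    have := hkey.trans' hlow
    rw [hcardR] at this
    nlinarith [this]
  exact ⟨main, Finset.sum_le_sum fun i _ => main i⟩
end

section
/- Let G be a simple undirected graph on a finite vertex set V. If G is severance-proof, then u_i(G) ≥ 0 for every vertex i. -/
open scoped Classical

theorem severanceProof_payoff_nonneg
    {V : Type*} [Fintype V] (G : SimpleGraph V)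
    (f : V → ℝ) (hf : ∀ v, 0 < f v) (δ : ℝ) (hδ0 : 0 < δ) (hδ1 : δ < 1)
    (c : ℝ) (hc : 0 < c)
    (hstable : SeveranceProof G f δ c) :
    ∀ i : V, payoff G f δ c i ≥ 0 := by
  intro i
  classical
  set T : SimpleGraph V → V → ℝ := fun H k =>
    if k ≠ i ∧ H.Reachable i k then δ ^ (H.dist i k - 1) * f k else 0 with hT
  have hTnonneg : ∀ H k, 0 ≤ T H k := by
    intro H k
    simp only [hT]
    split
    · exact mul_nonneg (pow_nonneg hδ0.le _) (hf k).le
    · exact le_refl 0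
  have hpayoffT : ∀ H : SimpleGraph V,
      payoff H f δ c i = (∑ k : V, T H k) - c * (H.degree i : ℝ) := by
    intro H; rfl
  set N := G.neighborFinset i with hNdef
  have hNcard : N.card = G.degree i := G.card_neighborFinset_eq_degree i
  -- base case: degree 0
  rcases Nat.eq_zero_or_pos (G.degree i) with hdeg | hdeg
  · rw [ge_iff_le, hpayoffT, hdeg]
    simp only [Nat.cast_zero, mul_zero, sub_zero]
    exact Finset.sum_nonneg fun k _ => hTnonneg G k
  -- degree of i after deleting edge s(i,j)
  have hdegree : ∀ j ∈ N, (G.deleteEdges {s(i,j)}).degree i = G.degree i - 1 := by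
    intro j hj
    have hadj : G.Adj i j := (G.mem_neighborFinset i j).mp hj
    have hnb : (G.deleteEdges {s(i,j)}).neighborFinset i = N.erase j := by
      ext b
      simp only [SimpleGraph.mem_neighborFinset, SimpleGraph.deleteEdges_adj,
        Set.mem_singleton_iff, Finset.mem_erase, hNdef]
      constructor
      · rintro ⟨h1, h2⟩
        exact ⟨fun hbj => h2 (by rw [hbj]), h1⟩
      · rintro ⟨h1, h2⟩
        exact ⟨h2, fun he => h1 (Sym2.congr_right.mp he)⟩
    rw [← SimpleGraph.card_neighborFinset_eq_degree, hnb,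
      Finset.card_erase_of_mem hj, hNcard]
  -- key per-vertex inequality
  have main : ∀ k : V, (G.degree i - 1 : ℕ) • T G k ≤
      ∑ j ∈ N, T (G.deleteEdges {s(i,j)}) k := by
    intro k
    by_cases hk : k ≠ i ∧ G.Reachable i k
    · obtain ⟨hki, hr⟩ := hk
      obtain ⟨q, hqp, hql⟩ := hr.exists_path_of_dist
      cases q with
      | nil => exact absurd rfl hki
      | @cons _ b _ had p =>
        have hb : b ∈ N := (G.mem_neighborFinset i b).mpr had
        rw [SimpleGraph.Walk.cons_isPath_iff] at hqp
        have hiP : i ∉ p.support := hqp.2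
        have hTle : ∀ j ∈ N.erase b, T G k ≤ T (G.deleteEdges {s(i,j)}) k := by
          intro j hj
          have hjb : j ≠ b := Finset.ne_of_mem_erase hj
          have hedge : ∀ e ∈ (SimpleGraph.Walk.cons had p).edges,
              e ∈ (G.deleteEdges {s(i,j)}).edgeSet := by
            intro e he
            rw [SimpleGraph.edgeSet_deleteEdges]
            refine ⟨(SimpleGraph.Walk.cons had p).edges_subset_edgeSet he, ?_⟩
            intro hef
            rw [Set.mem_singleton_iff] at hef
            subst hef
            rw [SimpleGraph.Walk.edges_cons, List.mem_cons] at he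
            rcases he with h1 | h2
            · exact hjb (Sym2.congr_right.mp h1)
            · exact hiP (p.fst_mem_support_of_mem_edges h2)
          set q' := (SimpleGraph.Walk.cons had p).transfer _ hedge with hq'
          have hreach : (G.deleteEdges {s(i,j)}).Reachable i k := q'.reachable
          have hdist : (G.deleteEdges {s(i,j)}).dist i k ≤ G.dist i k := by
            rw [← hql]
            calc (G.deleteEdges {s(i,j)}).dist i k ≤ q'.length :=
                SimpleGraph.dist_le q'
              _ = (SimpleGraph.Walk.cons had p).length := by
                rw [hq', SimpleGraph.Walk.length_transfer]
          simp only [hT, if_pos (And.intro hki hr), if_pos (And.intro hki hreach)]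
          exact mul_le_mul_of_nonneg_right
            (pow_le_pow_of_le_one hδ0.le hδ1.le (Nat.sub_le_sub_right hdist 1))
            (hf k).le
        calc (G.degree i - 1 : ℕ) • T G k = (N.erase b).card • T G k := by
              rw [Finset.card_erase_of_mem hb, hNcard]
          _ ≤ ∑ j ∈ N.erase b, T (G.deleteEdges {s(i,j)}) k :=
              Finset.card_nsmul_le_sum _ _ _ hTle
          _ ≤ ∑ j ∈ N, T (G.deleteEdges {s(i,j)}) k :=
              Finset.sum_le_sum_of_subset_of_nonneg (Finset.erase_subset _ _)
                (fun j _ _ => hTnonneg _ k)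
    · have : T G k = 0 := if_neg hk
      rw [this, smul_zero]
      exact Finset.sum_nonneg fun j _ => hTnonneg _ k
  -- severance-proofness for each neighbor
  have hpay : ∀ j ∈ N, payoff (G.deleteEdges {s(i,j)}) f δ c i ≤ payoff G f δ c i := by
    intro j hj
    have hadj : G.Adj i j := (G.mem_neighborFinset i j).mp hj
    exact hstable i s(i,j) (G.mem_edgeSet.mpr hadj) (Sym2.mem_mk_left i j)
  -- combine
  set B : ℝ := ∑ k : V, T G k with hB
  set d : ℕ := G.degree i with hd
  have hBu : payoff G f δ c i = B - c * (d : ℝ) := hpayoffT G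
  have h1 : ∑ j ∈ N, payoff (G.deleteEdges {s(i,j)}) f δ c i ≤
      (d : ℝ) * payoff G f δ c i := by
    calc ∑ j ∈ N, payoff (G.deleteEdges {s(i,j)}) f δ c i
        ≤ ∑ _j ∈ N, payoff G f δ c i := Finset.sum_le_sum hpay
      _ = N.card • payoff G f δ c i := by rw [Finset.sum_const]
      _ = (d : ℝ) * payoff G f δ c i := by rw [nsmul_eq_mul, hNcard]
  have h3 : ∑ j ∈ N, payoff (G.deleteEdges {s(i,j)}) f δ c i =
      (∑ j ∈ N, ∑ k : V, T (G.deleteEdges {s(i,j)}) k)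
        - (d : ℝ) * (c * ((d : ℝ) - 1)) := by
    simp only [hpayoffT]
    rw [Finset.sum_sub_distrib]
    congr 1
    have : ∀ j ∈ N, c * (((G.deleteEdges {s(i,j)}).degree i : ℕ) : ℝ) =
        c * ((d : ℝ) - 1) := by
      intro j hj
      rw [hdegree j hj]
      congr 1
      rw [Nat.cast_sub hdeg, Nat.cast_one]
    refine (Finset.sum_congr rfl (g := fun _ => c * ((d : ℝ) - 1)) (fun j hj => ?_)).trans ?_
    · convert this j hj
    · rw [Finset.sum_const, nsmul_eq_mul, hNcard]
  have h4 : ((d : ℝ) - 1) * B ≤ ∑ j ∈ N, ∑ k : V, T (G.deleteEdges {s(i,j)}) k := by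
    rw [Finset.sum_comm]
    calc ((d : ℝ) - 1) * B = ∑ k : V, ((d : ℝ) - 1) * T G k := by
          rw [hB, Finset.mul_sum]
      _ ≤ ∑ k : V, ∑ j ∈ N, T (G.deleteEdges {s(i,j)}) k := by
          refine Finset.sum_le_sum fun k _ => ?_
          have := main k
          rwa [nsmul_eq_mul, Nat.cast_sub hdeg, Nat.cast_one] at this
  have hfin : ((d : ℝ) - 1) * (B - c * (d : ℝ)) ≤ (d : ℝ) * payoff G f δ c i := by
    nlinarith [h1, h3, h4]
  rw [← hBu] at hfin
  linarith [hfin]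
end

section
/- Let S be the star graph on a finite vertex set V with |V| = N ≥ 3, with center v₀ and edges exactly {v₀, l} for every l ≠ v₀. Then: (i) for every peripheral vertex i ≠ v₀, u_i(S) = f(v₀) + δ·Σ_{l ≠ i, l ≠ v₀} f(l) − c, and u_i(S − iv₀) = 0; (ii) for every peripheral vertex j ≠ v₀, u_{v₀}(S) − u_{v₀}(S − v₀j) = f(j) − c. Consequently, S is severance-proof if and only if f(j) ≥ c for every peripheral vertex j and f(v₀) + δ·Σ_{l ≠ i, l ≠ v₀} f(l) ≥ c for every peripheral vertex i. -/
open scoped Classical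

private lemma isolated_reach {V : Type*} {G : SimpleGraph V} {i j : V}
    (h : ∀ b, ¬ G.Adj i b) (hr : G.Reachable i j) : j = i := by
  obtain ⟨w⟩ := hr
  cases w with
  | nil => rfl
  | cons h' _ => exact absurd h' (h _)

private lemma degree_eq_card {V : Type*} [Fintype V] (G : SimpleGraph V) (i : V) :
    G.degree i = (Finset.univ.filter (fun b => G.Adj i b)).card := by
  rw [← SimpleGraph.card_neighborFinset_eq_degree]
  congr 1
  ext b
  simp [SimpleGraph.mem_neighborFinset]

theorem star_payoffs_and_severanceProof_iff
    {V : Type*} [Fintype V] (hcard : 3 ≤ Fintype.card V)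
    (f : V → ℝ) (hf : ∀ v, 0 < f v) (δ : ℝ) (hδ0 : 0 < δ) (hδ1 : δ < 1)
    (c : ℝ) (hc : 0 < c)
    (v₀ : V) (S : SimpleGraph V)
    (hS : ∀ a b : V, S.Adj a b ↔ (a = v₀ ∧ b ≠ v₀) ∨ (b = v₀ ∧ a ≠ v₀)) :
    (∀ i : V, i ≠ v₀ →
      payoff S f δ c i
        = f v₀ + δ * (∑ l ∈ Finset.univ.filter (fun l => l ≠ i ∧ l ≠ v₀), f l) - c ∧
      payoff (S.deleteEdges {s(i, v₀)}) f δ c i = 0) ∧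
    (∀ j : V, j ≠ v₀ →
      payoff S f δ c v₀ - payoff (S.deleteEdges {s(v₀, j)}) f δ c v₀ = f j - c) ∧
    (SeveranceProof S f δ c ↔
      (∀ j : V, j ≠ v₀ → f j ≥ c) ∧
      (∀ i : V, i ≠ v₀ →
        f v₀ + δ * (∑ l ∈ Finset.univ.filter (fun l => l ≠ i ∧ l ≠ v₀), f l) ≥ c)) := by
  -- basic adjacency facts
  have hAdj0 : ∀ l, l ≠ v₀ → S.Adj v₀ l := fun l hl => (hS v₀ l).2 (Or.inl ⟨rfl, hl⟩)
  have hAdj0' : ∀ l, l ≠ v₀ → S.Adj l v₀ := fun l hl => (hS l v₀).2 (Or.inr ⟨rfl, hl⟩)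
  have hNotAdj : ∀ a b, a ≠ v₀ → b ≠ v₀ → ¬ S.Adj a b := by
    intro a b ha hb hadj
    rcases (hS a b).1 hadj with ⟨h, _⟩ | ⟨h, _⟩
    · exact ha h
    · exact hb h
  have hR0 : ∀ i : V, S.Reachable i v₀ := by
    intro i
    by_cases h : i = v₀
    · exact h ▸ SimpleGraph.Reachable.refl _
    · exact (hAdj0' i h).reachable
  have hreach : ∀ i j : V, S.Reachable i j := fun i j => (hR0 i).trans (hR0 j).symm
  have hd1 : ∀ {a b : V}, S.Adj a b → S.dist a b = 1 :=
    fun h => SimpleGraph.dist_eq_one_iff_adj.2 h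
  have hd2 : ∀ i j : V, i ≠ v₀ → j ≠ v₀ → i ≠ j → S.dist i j = 2 := by
    intro i j hi hj hij
    have hle : S.dist i j ≤ 2 := by
      have := SimpleGraph.dist_le ((hAdj0' i hi).toWalk.append (hAdj0 j hj).toWalk)
      simpa using this
    have h0 : S.dist i j ≠ 0 := by
      rw [SimpleGraph.dist_ne_zero_iff_ne_and_reachable]
      exact ⟨hij, hreach i j⟩
    have h1 : S.dist i j ≠ 1 := fun h =>
      hNotAdj i j hi hj (SimpleGraph.dist_eq_one_iff_adj.1 h)
    omega
  -- part (i), first half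
  have part1a : ∀ i : V, i ≠ v₀ →
      payoff S f δ c i
        = f v₀ + δ * (∑ l ∈ Finset.univ.filter (fun l => l ≠ i ∧ l ≠ v₀), f l) - c := by
    intro i hi
    have hdeg : S.degree i = 1 := by
      rw [degree_eq_card]
      have : (Finset.univ.filter (fun b => S.Adj i b)) = {v₀} := by
        ext b
        simp only [Finset.mem_filter, Finset.mem_univ, true_and, Finset.mem_singleton, hS]
        constructor
        · rintro (⟨h, _⟩ | ⟨h, _⟩)
          · exact absurd h hi
          · exact h
        · rintro rfl
          exact Or.inr ⟨rfl, hi⟩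
      rw [this, Finset.card_singleton]
    have hterm : ∀ j : V,
        (if j ≠ i ∧ S.Reachable i j then δ ^ (S.dist i j - 1) * f j else 0)
          = (if j = v₀ then f v₀ else 0) + (if j ≠ i ∧ j ≠ v₀ then δ * f j else 0) := by
      intro j
      by_cases hj0 : j = v₀
      · rw [hj0, if_pos ⟨Ne.symm hi, hreach i v₀⟩, hd1 (hAdj0' i hi)]
        simp [hi]
      · by_cases hji : j = i
        · rw [hji]
          simp [hi]
        · rw [if_pos ⟨hji, hreach i j⟩, hd2 i j hi hj0 (Ne.symm hji)]
          simp [hji, hj0]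
    unfold payoff
    rw [Finset.sum_congr rfl (fun j _ => hterm j), Finset.sum_add_distrib, hdeg]
    have h1 : (∑ j : V, if j = v₀ then f v₀ else 0) = f v₀ := by
      simp
    have h2 : (∑ j : V, if j ≠ i ∧ j ≠ v₀ then δ * f j else 0)
        = δ * (∑ l ∈ Finset.univ.filter (fun l => l ≠ i ∧ l ≠ v₀), f l) := by
      rw [← Finset.sum_filter, Finset.mul_sum]
    rw [h1, h2]
    ring
  -- part (i), second half
  have part1b : ∀ i : V, i ≠ v₀ →
      payoff (S.deleteEdges {s(i, v₀)}) f δ c i = 0 := by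
    intro i hi
    set G' := S.deleteEdges {s(i, v₀)} with hG'
    letI : DecidableRel G'.Adj := fun a b => Classical.propDecidable _
    have hiso : ∀ b, ¬ G'.Adj i b := by
      intro b hb
      rw [hG', SimpleGraph.deleteEdges_adj] at hb
      obtain ⟨hadj, hne⟩ := hb
      have hb0 : b = v₀ := by
        rcases (hS i b).1 hadj with ⟨h, _⟩ | ⟨h, _⟩
        · exact absurd h hi
        · exact h
      exact hne (by rw [hb0]; simp)
    have hdeg : G'.degree i = 0 := by
      rw [degree_eq_card]
      simp only [Finset.card_eq_zero]
      ext b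
      simp [hiso b]
    unfold payoff
    rw [hdeg]
    have : (∑ j : V, if j ≠ i ∧ G'.Reachable i j then δ ^ (G'.dist i j - 1) * f j else 0)
        = 0 := by
      apply Finset.sum_eq_zero
      intro j _
      rw [if_neg]
      rintro ⟨hji, hr⟩
      exact hji (isolated_reach hiso hr)
    rw [this]
    simp
  -- part (ii)
  have part2 : ∀ j : V, j ≠ v₀ →
      payoff S f δ c v₀ - payoff (S.deleteEdges {s(v₀, j)}) f δ c v₀ = f j - c := by
    intro j hj
    set G' := S.deleteEdges {s(v₀, j)} with hG'
    letI : DecidableRel G'.Adj := fun a b => Classical.propDecidable _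
    -- adjacency in G' from v₀
    have hG'adj : ∀ l : V, G'.Adj v₀ l ↔ (l ≠ v₀ ∧ l ≠ j) := by
      intro l
      rw [hG', SimpleGraph.deleteEdges_adj]
      constructor
      · rintro ⟨hadj, hne⟩
        have hl : l ≠ v₀ := fun h => (S.irrefl (h ▸ hadj))
        refine ⟨hl, fun hlj => hne ?_⟩
        rw [hlj]
        simp
      · rintro ⟨hl, hlj⟩
        refine ⟨hAdj0 l hl, fun he => ?_⟩
        simp only [Set.mem_singleton_iff, Sym2.eq, Sym2.rel_iff', Prod.mk.injEq,
          Prod.swap_prod_mk] at he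
        rcases he with ⟨_, h⟩ | ⟨h, _⟩
        · exact hlj h
        · exact hj h.symm
    have hjiso : ∀ b, ¬ G'.Adj j b := by
      intro b hb
      rw [hG', SimpleGraph.deleteEdges_adj] at hb
      obtain ⟨hadj, hne⟩ := hb
      have hb0 : b = v₀ := by
        rcases (hS j b).1 hadj with ⟨h, _⟩ | ⟨h, _⟩
        · exact absurd h hj
        · exact h
      apply hne
      rw [hb0]
      simp only [Set.mem_singleton_iff]
      exact Sym2.eq_swap
    have hnr : ¬ G'.Reachable v₀ j := by
      intro hr
      exact hj ((isolated_reach hjiso hr.symm)).symm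
    -- payoff of v₀ in S
    have hterm1 : ∀ l : V,
        (if l ≠ v₀ ∧ S.Reachable v₀ l then δ ^ (S.dist v₀ l - 1) * f l else 0)
          = (if l ≠ v₀ then f l else 0) := by
      intro l
      by_cases hl : l = v₀
      · simp [hl]
      · rw [if_pos ⟨hl, hreach v₀ l⟩, if_pos hl, hd1 (hAdj0 l hl)]
        simp
    -- payoff of v₀ in G'
    have hterm2 : ∀ l : V,
        (if l ≠ v₀ ∧ G'.Reachable v₀ l then δ ^ (G'.dist v₀ l - 1) * f l else 0)
          = (if l ≠ v₀ ∧ l ≠ j then f l else 0) := by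
      intro l
      by_cases hl : l = v₀
      · simp [hl]
      · by_cases hlj : l = j
        · subst hlj
          rw [if_neg (fun h => hnr h.2), if_neg (fun h => h.2 rfl)]
        · have hadj : G'.Adj v₀ l := (hG'adj l).2 ⟨hl, hlj⟩
          rw [if_pos ⟨hl, hadj.reachable⟩, if_pos ⟨hl, hlj⟩,
            SimpleGraph.dist_eq_one_iff_adj.2 hadj]
          simp
    have hdeg1 : S.degree v₀ = (Finset.univ.filter (fun l : V => l ≠ v₀)).card := by
      rw [degree_eq_card]
      congr 1
      ext b
      simp only [Finset.mem_filter, Finset.mem_univ, true_and, hS]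
      tauto
    have hdeg2 : G'.degree v₀
        = (Finset.univ.filter (fun l : V => l ≠ v₀ ∧ l ≠ j)).card := by
      rw [degree_eq_card]
      congr 1
      ext b
      simp [hG'adj b]
    -- the filter relation
    have hfil : Finset.univ.filter (fun l : V => l ≠ v₀ ∧ l ≠ j)
        = (Finset.univ.filter (fun l : V => l ≠ v₀)).erase j := by
      ext l
      simp only [Finset.mem_filter, Finset.mem_univ, true_and, Finset.mem_erase]
      tauto
    have hjmem : j ∈ Finset.univ.filter (fun l : V => l ≠ v₀) := by
      simp [hj]
    have hsum : (∑ l ∈ Finset.univ.filter (fun l : V => l ≠ v₀), f l)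
        = f j + ∑ l ∈ Finset.univ.filter (fun l : V => l ≠ v₀ ∧ l ≠ j), f l := by
      rw [hfil, Finset.add_sum_erase _ f hjmem]
    have hcardrel : (Finset.univ.filter (fun l : V => l ≠ v₀ ∧ l ≠ j)).card + 1
        = (Finset.univ.filter (fun l : V => l ≠ v₀)).card := by
      rw [hfil, Finset.card_erase_add_one hjmem]
    unfold payoff
    rw [Finset.sum_congr rfl (fun l _ => hterm1 l),
        Finset.sum_congr rfl (fun l _ => hterm2 l),
        ← Finset.sum_filter, ← Finset.sum_filter, hdeg1, hdeg2, hsum, ← hcardrel]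
    push_cast
    ring
  refine ⟨fun i hi => ⟨part1a i hi, part1b i hi⟩, part2, ?_⟩
  constructor
  · intro hSP
    constructor
    · intro j hj
      have he : s(v₀, j) ∈ S.edgeSet := (SimpleGraph.mem_edgeSet _).2 (hAdj0 j hj)
      have := hSP v₀ s(v₀, j) he (Sym2.mem_mk_left _ _)
      have hdiff := part2 j hj
      linarith
    · intro i hi
      have he : s(i, v₀) ∈ S.edgeSet := (SimpleGraph.mem_edgeSet _).2 (hAdj0' i hi)
      have := hSP i s(i, v₀) he (Sym2.mem_mk_left _ _)
      rw [part1a i hi, part1b i hi] at this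
      linarith
  · rintro ⟨h1, h2⟩
    intro i e he hie
    induction e with
    | h a b =>
      rw [SimpleGraph.mem_edgeSet] at he
      rw [Sym2.mem_iff] at hie
      rcases (hS a b).1 he with ⟨ha, hb⟩ | ⟨hb, ha⟩
      · rcases hie with hia | hib
        · -- i = a = v₀, e = s(v₀, b)
          rw [hia, ha]
          have := part2 b hb
          have := h1 b hb
          linarith
        · -- i = b, e = s(v₀, i) = s(i, v₀)
          have hi' : i ≠ v₀ := by rw [hib]; exact hb
          have hE : s(a, b) = s(i, v₀) := by rw [ha, hib, Sym2.eq_swap]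
          rw [hE, part1b i hi', part1a i hi']
          have := h2 i hi'
          linarith
      · rcases hie with hia | hib
        · -- i = a, e = s(i, v₀)
          have hi' : i ≠ v₀ := by rw [hia]; exact ha
          have hE : s(a, b) = s(i, v₀) := by rw [hb, hia]
          rw [hE, part1b i hi', part1a i hi']
          have := h2 i hi'
          linarith
        · -- i = b = v₀, e = s(a, v₀) = s(v₀, a)
          rw [hib, hb, show s(a, v₀) = s(v₀, a) from Sym2.eq_swap]
          have := part2 a ha
          have := h1 a ha
          linarith
end

section
/- Let S be the star graph on a finite vertex set V with center v₀ and n ≥ 2 peripheral vertices, where every edge of S joins v₀ to a peripheral vertex. Suppose f(l) ≥ c for every peripheral vertex l, and f(v₀) + δ·(n − 1)·c ≥ c. Then S is severance-proof, even when f(v₀) < c. -/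
open scoped Classical

/-- A vertex with no neighbors can only reach itself. -/
lemma reachable_isolated {V : Type*} (G : SimpleGraph V) (l : V)
    (h : ∀ y, ¬ G.Adj l y) (j : V) (hr : G.Reachable l j) : j = l := by
  obtain ⟨w⟩ := hr
  cases w with
  | nil => rfl
  | cons h' _ => exact absurd h' (h _)

theorem star_with_lowValue_center_severanceProof
    {V : Type*} [Fintype V] (n : ℕ) (hn : 2 ≤ n) (hcard : Fintype.card V = n + 1)
    (f : V → ℝ) (hf : ∀ v, 0 < f v) (δ : ℝ) (hδ0 : 0 < δ) (hδ1 : δ < 1)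
    (c : ℝ) (hc : 0 < c)
    (v₀ : V) (S : SimpleGraph V)
    (hS : ∀ a b : V, S.Adj a b ↔ (a = v₀ ∧ b ≠ v₀) ∨ (b = v₀ ∧ a ≠ v₀))
    (hperiph : ∀ l : V, l ≠ v₀ → f l ≥ c)
    (hcenter : f v₀ + δ * ((n : ℝ) - 1) * c ≥ c) :
    SeveranceProof S f δ c := by
  -- adjacency with center
  have hadjc : ∀ j, S.Adj v₀ j ↔ j ≠ v₀ := by
    intro j; rw [hS]
    constructor
    · rintro (⟨_, h⟩ | ⟨_, h'⟩)
      · exact h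
      · exact absurd rfl h'
    · intro h; exact Or.inl ⟨rfl, h⟩
  have hadjc' : ∀ j, S.Adj j v₀ ↔ j ≠ v₀ := by
    intro j; rw [S.adj_comm]; exact hadjc j
  -- distances in S
  have hdistc : ∀ j, j ≠ v₀ → S.dist v₀ j = 1 := by
    intro j hj; exact SimpleGraph.dist_eq_one_iff_adj.mpr ((hadjc j).mpr hj)
  have hdistp : ∀ j k, j ≠ v₀ → k ≠ v₀ → j ≠ k → S.dist j k = 2 := by
    intro j k hj hk hjk
    have hadj1 : S.Adj j v₀ := (hadjc' j).mpr hj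
    have hadj2 : S.Adj v₀ k := (hadjc k).mpr hk
    have hw : S.dist j k ≤ 2 := by
      have := SimpleGraph.dist_le (SimpleGraph.Walk.cons hadj1
        (SimpleGraph.Walk.cons hadj2 SimpleGraph.Walk.nil))
      simpa using this
    have hr : S.Reachable j k := hadj1.reachable.trans hadj2.reachable
    have h0 : 0 < S.dist j k := hr.pos_dist_of_ne hjk
    have h1 : S.dist j k ≠ 1 := by
      intro h
      have := SimpleGraph.dist_eq_one_iff_adj.mp h
      rw [hS] at this
      rcases this with ⟨h', _⟩ | ⟨h', _⟩
      · exact hj h'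
      · exact hk h'
    omega
  -- key lemma for one edge {v₀, l}
  have key : ∀ l : V, l ≠ v₀ → ∀ i : V, i = v₀ ∨ i = l →
      payoff S f δ c i ≥ payoff (S.deleteEdges {s(v₀, l)}) f δ c i := by
    intro l hl i hi
    set G' := S.deleteEdges {s(v₀, l)} with hG'
    have hG'adj : ∀ x y, G'.Adj x y ↔ S.Adj x y ∧ ¬ (s(x, y) = s(v₀, l)) := by
      intro x y
      rw [hG', SimpleGraph.deleteEdges_adj]
      simp
    have hlisol : ∀ y, ¬ G'.Adj l y := by
      intro y hy
      rw [hG'adj] at hy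
      obtain ⟨hadj, hne⟩ := hy
      rw [hS] at hadj
      rcases hadj with ⟨h', _⟩ | ⟨h', _⟩
      · exact hl h'
      · apply hne; rw [h', Sym2.eq_swap]
    have hG'adjc : ∀ j, G'.Adj v₀ j ↔ (j ≠ v₀ ∧ j ≠ l) := by
      intro j
      rw [hG'adj, hadjc]
      constructor
      · rintro ⟨hj, hne⟩
        refine ⟨hj, fun h => hne ?_⟩
        rw [h]
      · rintro ⟨hj, hjl⟩
        refine ⟨hj, fun h => ?_⟩
        rw [Sym2.eq_iff] at h
        rcases h with ⟨_, h⟩ | ⟨h, _⟩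
        · exact hjl h
        · exact hl h.symm
    rcases hi with h | h <;> rw [h]
    · -- i = v₀ : center severs the link to l
      -- degree of v₀ in S
      have hnbS : S.neighborFinset v₀ = Finset.univ.erase v₀ := by
        ext x
        simp [SimpleGraph.mem_neighborFinset, hadjc, eq_comm]
      have hdegS : S.degree v₀ = n := by
        rw [SimpleGraph.degree, hnbS, Finset.card_erase_of_mem (Finset.mem_univ _),
          Finset.card_univ, hcard]
        omega
      have hnbG' : G'.neighborFinset v₀ = (Finset.univ.erase v₀).erase l := by
        ext x
        simp only [SimpleGraph.mem_neighborFinset, hG'adjc, Finset.mem_erase,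
          Finset.mem_univ, and_true]
        tauto
      have hdegG' : G'.degree v₀ = n - 1 := by
        rw [SimpleGraph.degree, hnbG', Finset.card_erase_of_mem
          (by simp [Finset.mem_erase, hl]), Finset.card_erase_of_mem (Finset.mem_univ _),
          Finset.card_univ, hcard]
        omega
      -- sums
      have hsumS : (∑ j : V, if j ≠ v₀ ∧ S.Reachable v₀ j then
          δ ^ (S.dist v₀ j - 1) * f j else 0) = ∑ j ∈ Finset.univ.erase v₀, f j := by
        rw [← Finset.sum_erase (f := fun j => if j ≠ v₀ ∧ S.Reachable v₀ j then
            δ ^ (S.dist v₀ j - 1) * f j else 0) (s := Finset.univ) (a := v₀) (h := by simp)]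
        apply Finset.sum_congr rfl
        intro j hj
        have hj' : j ≠ v₀ := (Finset.mem_erase.mp hj).1
        rw [if_pos ⟨hj', ((hadjc j).mpr hj').reachable⟩, hdistc j hj']
        simp
      have hsumG' : (∑ j : V, if j ≠ v₀ ∧ G'.Reachable v₀ j then
          δ ^ (G'.dist v₀ j - 1) * f j else 0)
          = ∑ j ∈ (Finset.univ.erase v₀).erase l, f j := by
        rw [← Finset.sum_erase (f := fun j => if j ≠ v₀ ∧ G'.Reachable v₀ j then
            δ ^ (G'.dist v₀ j - 1) * f j else 0) (s := Finset.univ) (a := v₀) (h := by simp),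
          ← Finset.sum_erase _ (a := l) (h := ?_)]
        · apply Finset.sum_congr rfl
          intro j hj
          rw [Finset.mem_erase, Finset.mem_erase] at hj
          have hjl : j ≠ l := hj.1
          have hj0 : j ≠ v₀ := hj.2.1
          have hadj : G'.Adj v₀ j := (hG'adjc j).mpr ⟨hj0, hjl⟩
          rw [if_pos ⟨hj0, hadj.reachable⟩, SimpleGraph.dist_eq_one_iff_adj.mpr hadj]
          simp
        · -- term at l is zero: l not reachable from v₀ in G'
          rw [if_neg]
          rintro ⟨_, hr⟩
          have := reachable_isolated G' l hlisol v₀ hr.symm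
          exact hl this.symm
      have hsplit : (∑ j ∈ Finset.univ.erase v₀, f j)
          = f l + ∑ j ∈ (Finset.univ.erase v₀).erase l, f j := by
        rw [← Finset.add_sum_erase _ f (a := l) (by simp [Finset.mem_erase, hl])]
      have hfl : f l ≥ c := hperiph l hl
      have hn1 : ((n - 1 : ℕ) : ℝ) = (n : ℝ) - 1 := by
        have : 1 ≤ n := by omega
        push_cast [Nat.cast_sub this]
        ring
      rw [payoff, payoff, hsumS, hdegS, hsplit]
      have e : (∑ j : V, if j ≠ v₀ ∧ G'.Reachable v₀ j then
          δ ^ (G'.dist v₀ j - 1) * f j else 0) - c * (G'.degree v₀ : ℝ)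
          = (∑ j ∈ (Finset.univ.erase v₀).erase l, f j) - c * ((n : ℝ) - 1) := by
        rw [hsumG', hdegG', hn1]
      calc _ ≥ (∑ j ∈ (Finset.univ.erase v₀).erase l, f j) - c * ((n : ℝ) - 1) := by linarith
        _ = _ := by convert e.symm
    · -- i = l : peripheral agent severs its only link
      -- degree of l in S is 1
      have hnbSl : S.neighborFinset l = {v₀} := by
        ext x
        simp only [SimpleGraph.mem_neighborFinset, Finset.mem_singleton, hS]
        constructor
        · rintro (⟨h, _⟩ | ⟨h, _⟩)
          · exact absurd h hl
          · exact h
        · rintro rfl; exact Or.inr ⟨rfl, hl⟩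
      have hdegSl : S.degree l = 1 := by
        rw [SimpleGraph.degree, hnbSl, Finset.card_singleton]
      -- in G', l is isolated
      have hnbG'l : G'.neighborFinset l = ∅ := by
        ext x
        simp only [SimpleGraph.mem_neighborFinset]
        exact ⟨fun h => (hlisol x h).elim, fun h => absurd h (Finset.notMem_empty x)⟩
      have hdegG'l : G'.degree l = 0 := by
        rw [SimpleGraph.degree, hnbG'l, Finset.card_empty]
      have hsumG'l : (∑ j : V, if j ≠ l ∧ G'.Reachable l j then
          δ ^ (G'.dist l j - 1) * f j else 0) = 0 := by
        apply Finset.sum_eq_zero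
        intro j _
        rw [if_neg]
        rintro ⟨hj, hr⟩
        exact hj (reachable_isolated G' l hlisol j hr)
      -- payoff of l in S
      have hterm : ∀ j, j ≠ l → j ≠ v₀ →
          (if j ≠ l ∧ S.Reachable l j then δ ^ (S.dist l j - 1) * f j else 0)
            = δ * f j := by
        intro j hjl hj0
        have hr : S.Reachable l j :=
          ((hadjc' l).mpr hl).reachable.trans ((hadjc j).mpr hj0).reachable
        rw [if_pos ⟨hjl, hr⟩, hdistp l j hl hj0 (Ne.symm hjl)]
        simp [pow_one]
      have hsumSl : (∑ j : V, if j ≠ l ∧ S.Reachable l j then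
          δ ^ (S.dist l j - 1) * f j else 0)
          = f v₀ + ∑ j ∈ (Finset.univ.erase l).erase v₀, δ * f j := by
        rw [← Finset.sum_erase (f := fun j => if j ≠ l ∧ S.Reachable l j then
            δ ^ (S.dist l j - 1) * f j else 0) (s := Finset.univ) (a := l) (h := by simp),
          ← Finset.add_sum_erase _ _ (a := v₀)
            (by simp [Finset.mem_erase, Ne.symm hl])]
        congr 1
        · have hr : S.Reachable l v₀ := ((hadjc' l).mpr hl).reachable
          rw [if_pos ⟨Ne.symm hl, hr⟩]
          have : S.dist l v₀ = 1 := SimpleGraph.dist_eq_one_iff_adj.mpr ((hadjc' l).mpr hl)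
          rw [this]
          simp
        · apply Finset.sum_congr rfl
          intro j hj
          rw [Finset.mem_erase, Finset.mem_erase] at hj
          exact hterm j hj.2.1 hj.1
      have hcard2 : ((Finset.univ.erase l).erase v₀).card = n - 1 := by
        rw [Finset.card_erase_of_mem (by simp [Finset.mem_erase, Ne.symm hl]),
          Finset.card_erase_of_mem (Finset.mem_univ _), Finset.card_univ, hcard]
        omega
      have hbound : ∑ j ∈ (Finset.univ.erase l).erase v₀, δ * f j
          ≥ ((n : ℝ) - 1) * (δ * c) := by
        have h1 : ∀ j ∈ (Finset.univ.erase l).erase v₀, δ * c ≤ δ * f j := by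
          intro j hj
          rw [Finset.mem_erase, Finset.mem_erase] at hj
          exact mul_le_mul_of_nonneg_left (hperiph j hj.1) hδ0.le
        have h2 := Finset.card_nsmul_le_sum _ _ _ h1
        rw [hcard2] at h2
        have hn1 : ((n - 1 : ℕ) : ℝ) = (n : ℝ) - 1 := by
          have : 1 ≤ n := by omega
          push_cast [Nat.cast_sub this]
          ring
        calc ((n : ℝ) - 1) * (δ * c) = ((n - 1 : ℕ) : ℝ) * (δ * c) := by rw [hn1]
          _ = (n - 1 : ℕ) • (δ * c) := by rw [nsmul_eq_mul]
          _ ≤ _ := h2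
      rw [payoff, payoff, hsumSl, hdegSl]
      have : δ * ((n : ℝ) - 1) * c = ((n : ℝ) - 1) * (δ * c) := by ring
      simp only [Nat.cast_one, Nat.cast_zero]
      have e : (∑ j : V, if j ≠ l ∧ G'.Reachable l j then
          δ ^ (G'.dist l j - 1) * f j else 0) - c * (G'.degree l : ℝ) = (0 : ℝ) - c * 0 := by
        rw [hsumG'l, hdegG'l, Nat.cast_zero]
      calc _ ≥ (0 : ℝ) - c * 0 := by linarith
        _ = _ := by convert e.symm
  -- reduce to the key lemma
  intro i e he hie
  induction e using Sym2.ind with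
  | _ a b =>
    rw [SimpleGraph.mem_edgeSet, hS] at he
    rw [Sym2.mem_iff] at hie
    rcases he with ⟨rfl, hb⟩ | ⟨rfl, ha⟩
    · exact key b hb i hie
    · rw [Sym2.eq_swap]
      exact key a ha i hie.symm
end

section
/- Let C₅ be the cycle graph on 5 vertices and suppose f(v) = w > 0 for every vertex v. Then for every vertex i and every edge e of C₅ incident to i, u_i(C₅) − u_i(C₅ − e) = (1 + δ − δ² − δ³)·w − c. Consequently, C₅ is severance-proof if and only if (1 + δ − δ² − δ³)·w ≥ c. -/
open scoped Classical

private lemma walk_pot {V : Type*} {G : SimpleGraph V} (φ : V → ℕ)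
    (h : ∀ a b, G.Adj a b → φ b ≤ φ a + 1) {u v : V} (p : G.Walk u v) :
    φ v ≤ φ u + p.length := by
  induction p with
  | nil => simp
  | cons hadj p ih =>
      have := h _ _ hadj
      simp only [SimpleGraph.Walk.length_cons]
      omega

private lemma dist_ge_pot {V : Type*} {G : SimpleGraph V} (φ : V → ℕ)
    (h : ∀ a b, G.Adj a b → φ b ≤ φ a + 1) {u v : V} (hr : G.Reachable u v) :
    φ v ≤ φ u + G.dist u v := by
  obtain ⟨p, hp⟩ := hr.exists_walk_length_eq_dist
  have := walk_pot φ h p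
  omega

private lemma sum_shift (i : ZMod 5) (F : ZMod 5 → ℝ) :
    ∑ j : ZMod 5, F j = F (i+0) + F (i+1) + F (i+2) + F (i+3) + F (i+4) := by
  rw [← Equiv.sum_comp (Equiv.addLeft i) F]
  have h : (Finset.univ : Finset (ZMod 5)) = {0,1,2,3,4} := by decide
  rw [h, Finset.sum_insert (by decide), Finset.sum_insert (by decide),
    Finset.sum_insert (by decide), Finset.sum_insert (by decide), Finset.sum_singleton]
  simp only [Equiv.coe_addLeft]
  ring_nf

private lemma decpot1 : ∀ k a b : ZMod 5,
    ((a - b = 1 ∨ b - a = 1) ∧ ¬((a = k ∧ b = k+1) ∨ (a = k+1 ∧ b = k))) →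
    (k - b).val ≤ (k - a).val + 1 := by decide

private lemma decpot2 : ∀ k a b : ZMod 5,
    ((a - b = 1 ∨ b - a = 1) ∧ ¬((a = k ∧ b = k+1) ∨ (a = k+1 ∧ b = k))) →
    (b - (k+1)).val ≤ (a - (k+1)).val + 1 := by decide

private lemma diff_core (C : SimpleGraph (ZMod 5))
    (hC : ∀ a b : ZMod 5, C.Adj a b ↔ a - b = 1 ∨ b - a = 1)
    (f : ZMod 5 → ℝ) (w : ℝ) (hfw : ∀ v, f v = w) (δ c : ℝ)
    (k i : ZMod 5) (hik : i = k ∨ i = k + 1) :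
    payoff C f δ c i - payoff (C.deleteEdges {s(k, k+1)}) f δ c i
      = (1 + δ - δ ^ 2 - δ ^ 3) * w - c := by
  set G' := C.deleteEdges {s(k, k+1)} with hG'def
  -- offset adjacency in C
  have hCo : ∀ x t : ZMod 5, C.Adj x (x + t) ↔ (t = 1 ∨ t = 4) := by
    intro x t
    rw [hC]
    have h1 : x - (x + t) = -t := by ring
    have h2 : x + t - x = t := by ring
    rw [h1, h2]
    constructor
    · rintro (h | h)
      · right
        have ht : t = -(-t) := by ring
        rw [ht, h]; decide
      · left; exact h
    · rintro (h | h)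
      · right; exact h
      · left; rw [h]; decide
  have hCadj2 : ∀ x a b : ZMod 5, (b - a = 1 ∨ b - a = 4) → C.Adj (x+a) (x+b) := by
    intro x a b h
    have := (hCo (x+a) (b-a)).2 h
    rwa [show (x+a)+(b-a) = x + b from by ring] at this
  have hCadj : ∀ x b : ZMod 5, (b = 1 ∨ b = 4) → C.Adj x (x+b) := fun x b h => (hCo x b).2 h
  have hCk : ∀ x j : ZMod 5, C.Adj x j ↔ (j = x + 1 ∨ j = x + 4) := by
    intro x j
    obtain ⟨y, rfl⟩ : ∃ y, j = x + y := ⟨j - x, by ring⟩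
    simp only [hCo, add_right_inj]
  -- ne facts
  have hne : ∀ x t : ZMod 5, t ≠ 0 → x ≠ x + t := by
    intro x t ht h
    exact ht (left_eq_add.mp h)
  have hne' : ∀ x t : ZMod 5, t ≠ 0 → x + t ≠ x := fun x t ht => (hne x t ht).symm
  -- distances in C
  have hdC1 : ∀ x : ZMod 5, C.dist x (x+1) = 1 :=
    fun x => SimpleGraph.dist_eq_one_iff_adj.mpr (hCadj x 1 (Or.inl rfl))
  have hdC4 : ∀ x : ZMod 5, C.dist x (x+4) = 1 :=
    fun x => SimpleGraph.dist_eq_one_iff_adj.mpr (hCadj x 4 (Or.inr rfl))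
  have hwC2 : ∀ x : ZMod 5, C.Walk x (x+2) := fun x =>
    .cons (hCadj x 1 (Or.inl rfl)) (.cons (hCadj2 x 1 2 (by left; decide)) .nil)
  have hwC3 : ∀ x : ZMod 5, C.Walk x (x+3) := fun x =>
    .cons (hCadj x 4 (Or.inr rfl)) (.cons (hCadj2 x 4 3 (by right; decide)) .nil)
  have hdC2 : ∀ x : ZMod 5, C.dist x (x+2) = 2 := by
    intro x
    have hub : C.dist x (x+2) ≤ 2 := by
      have hlen := SimpleGraph.dist_le (SimpleGraph.Walk.cons (hCadj x 1 (Or.inl rfl))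
        (SimpleGraph.Walk.cons (hCadj2 x 1 2 (by left; decide)) SimpleGraph.Walk.nil))
      simp only [SimpleGraph.Walk.length_cons, SimpleGraph.Walk.length_nil] at hlen
      omega
    have hpos : 0 < C.dist x (x+2) :=
      (hwC2 x).reachable.pos_dist_of_ne (hne x 2 (by decide))
    have hne1 : C.dist x (x+2) ≠ 1 := by
      intro h
      rcases (hCo x 2).1 (SimpleGraph.dist_eq_one_iff_adj.mp h) with h2 | h2 <;>
        exact absurd h2 (by decide)
    omega
  have hdC3 : ∀ x : ZMod 5, C.dist x (x+3) = 2 := by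
    intro x
    have hub : C.dist x (x+3) ≤ 2 := by
      have hlen := SimpleGraph.dist_le (SimpleGraph.Walk.cons (hCadj x 4 (Or.inr rfl))
        (SimpleGraph.Walk.cons (hCadj2 x 4 3 (by right; decide)) SimpleGraph.Walk.nil))
      simp only [SimpleGraph.Walk.length_cons, SimpleGraph.Walk.length_nil] at hlen
      omega
    have hpos : 0 < C.dist x (x+3) :=
      (hwC3 x).reachable.pos_dist_of_ne (hne x 3 (by decide))
    have hne1 : C.dist x (x+3) ≠ 1 := by
      intro h
      rcases (hCo x 3).1 (SimpleGraph.dist_eq_one_iff_adj.mp h) with h2 | h2 <;>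
        exact absurd h2 (by decide)
    omega
  -- degree in C
  have hdegC : ∀ x : ZMod 5, C.degree x = 2 := by
    intro x
    have h : C.neighborFinset x = {x+1, x+4} := by
      ext j
      rw [SimpleGraph.mem_neighborFinset, hCk x j, Finset.mem_insert, Finset.mem_singleton]
    rw [← SimpleGraph.card_neighborFinset_eq_degree, h]
    exact Finset.card_pair (by simp only [ne_eq, add_right_inj]; decide)
  -- payoff in C
  have hpayC : ∀ x : ZMod 5, payoff C f δ c x = 2*w + 2*(δ*w) - 2*c := by
    intro x
    simp only [payoff]
    rw [sum_shift x, hdegC]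
    rw [if_neg (by simp : ¬(x + 0 ≠ x ∧ C.Reachable x (x+0))),
      if_pos ⟨hne' x 1 (by decide), (hCadj x 1 (Or.inl rfl)).reachable⟩,
      if_pos ⟨hne' x 2 (by decide), (hwC2 x).reachable⟩,
      if_pos ⟨hne' x 3 (by decide), (hwC3 x).reachable⟩,
      if_pos ⟨hne' x 4 (by decide), (hCadj x 4 (Or.inr rfl)).reachable⟩,
      hdC1, hdC2, hdC3, hdC4, hfw, hfw, hfw, hfw]
    norm_num
    try ring
  -- offset adjacency in G'
  have hGo : ∀ x y : ZMod 5, G'.Adj (k+x) (k+y) ↔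
      ((y - x = 1 ∨ y - x = 4) ∧ ¬((x = 0 ∧ y = 1) ∨ (x = 1 ∧ y = 0))) := by
    intro x y
    have hA : C.Adj (k+x) (k+y) ↔ (y - x = 1 ∨ y - x = 4) := by
      have := hCo (k+x) (y-x)
      rwa [show (k+x)+(y-x) = k+y from by ring] at this
    rw [hG'def, SimpleGraph.deleteEdges_adj, hA, Set.mem_singleton_iff, Sym2.eq_iff]
    constructor
    · rintro ⟨h1, h2⟩
      refine ⟨h1, ?_⟩
      rintro (⟨ha, hb⟩ | ⟨ha, hb⟩)
      · exact h2 (Or.inl ⟨by rw [ha, add_zero], by rw [hb]⟩)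
      · exact h2 (Or.inr ⟨by rw [ha], by rw [hb, add_zero]⟩)
    · rintro ⟨h1, h2⟩
      refine ⟨h1, ?_⟩
      rintro (⟨ha, hb⟩ | ⟨ha, hb⟩)
      · exact h2 (Or.inl ⟨add_eq_left.mp ha, (add_right_inj k).mp hb⟩)
      · exact h2 (Or.inr ⟨(add_right_inj k).mp ha, add_eq_left.mp hb⟩)
  -- potential condition for lower bounds in G'
  have hGadjelim : ∀ a b : ZMod 5, G'.Adj a b →
      ((a - b = 1 ∨ b - a = 1) ∧ ¬((a = k ∧ b = k+1) ∨ (a = k+1 ∧ b = k))) := by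
    intro a b hab
    rw [hG'def, SimpleGraph.deleteEdges_adj, hC, Set.mem_singleton_iff, Sym2.eq_iff] at hab
    exact hab
  rcases hik with h | h <;> rw [h]
  · -- i = k : distances in G' from k
    have a04 : G'.Adj k (k+4) := by
      have := (hGo 0 4).2 (by decide)
      rwa [add_zero] at this
    have a43 : G'.Adj (k+4) (k+3) := (hGo 4 3).2 (by decide)
    have a32 : G'.Adj (k+3) (k+2) := (hGo 3 2).2 (by decide)
    have a21 : G'.Adj (k+2) (k+1) := (hGo 2 1).2 (by decide)
    have w3 : G'.Walk k (k+3) := .cons a04 (.cons a43 .nil)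
    have w2 : G'.Walk k (k+2) := .cons a04 (.cons a43 (.cons a32 .nil))
    have w1 : G'.Walk k (k+1) := .cons a04 (.cons a43 (.cons a32 (.cons a21 .nil)))
    have hpot : ∀ a b, G'.Adj a b → (k - b).val ≤ (k - a).val + 1 :=
      fun a b hab => decpot1 k a b (hGadjelim a b hab)
    have hφ : ∀ t : ZMod 5, (k - (k + t)).val = (-t).val := by
      intro t; rw [show k - (k+t) = -t from by ring]
    have hlow : ∀ t : ZMod 5, G'.Reachable k (k+t) → (-t).val ≤ G'.dist k (k+t) := by
      intro t hr
      have := dist_ge_pot (fun x => (k - x).val) hpot hr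
      simpa [hφ t] using this
    have d4 : G'.dist k (k+4) = 1 := SimpleGraph.dist_eq_one_iff_adj.mpr a04
    have d3 : G'.dist k (k+3) = 2 := by
      have hub : G'.dist k (k+3) ≤ 2 := by
        have hlen := SimpleGraph.dist_le (SimpleGraph.Walk.cons a04 (SimpleGraph.Walk.cons a43 SimpleGraph.Walk.nil))
        simp only [SimpleGraph.Walk.length_cons, SimpleGraph.Walk.length_nil] at hlen
        omega
      have hlb := hlow 3 w3.reachable
      have : ((-3 : ZMod 5)).val = 2 := by decide
      omega
    have d2 : G'.dist k (k+2) = 3 := by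
      have hub : G'.dist k (k+2) ≤ 3 := by
        have hlen := SimpleGraph.dist_le (SimpleGraph.Walk.cons a04 (SimpleGraph.Walk.cons a43 (SimpleGraph.Walk.cons a32 SimpleGraph.Walk.nil)))
        simp only [SimpleGraph.Walk.length_cons, SimpleGraph.Walk.length_nil] at hlen
        omega
      have hlb := hlow 2 w2.reachable
      have : ((-2 : ZMod 5)).val = 3 := by decide
      omega
    have d1 : G'.dist k (k+1) = 4 := by
      have hub : G'.dist k (k+1) ≤ 4 := by
        have hlen := SimpleGraph.dist_le (SimpleGraph.Walk.cons a04 (SimpleGraph.Walk.cons a43 (SimpleGraph.Walk.cons a32 (SimpleGraph.Walk.cons a21 SimpleGraph.Walk.nil))))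
        simp only [SimpleGraph.Walk.length_cons, SimpleGraph.Walk.length_nil] at hlen
        omega
      have hlb := hlow 1 w1.reachable
      have : ((-1 : ZMod 5)).val = 4 := by decide
      omega
    -- degree of k in G'
    have hGk : ∀ j, G'.Adj k j ↔ j = k + 4 := by
      intro j
      obtain ⟨y, rfl⟩ : ∃ y, j = k + y := ⟨j - k, by ring⟩
      have h0 := hGo 0 y
      rw [add_zero] at h0
      rw [h0, add_right_inj]
      clear h0
      revert y; decide
    have hdegG : G'.degree k = 1 := by
      have h : G'.neighborFinset k = {k+4} := by
        ext j
        rw [SimpleGraph.mem_neighborFinset, hGk j, Finset.mem_singleton]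
      rw [← SimpleGraph.card_neighborFinset_eq_degree, h, Finset.card_singleton]
    have hpayG : payoff G' f δ c k = w + δ*w + δ^2*w + δ^3*w - c := by
      simp only [payoff]
      rw [sum_shift k, (fun inst => by convert hdegG : ∀ inst, @SimpleGraph.degree _ G' k inst = 1)]
      rw [if_neg (by simp : ¬(k + 0 ≠ k ∧ G'.Reachable k (k+0))),
        if_pos ⟨hne' k 1 (by decide), w1.reachable⟩,
        if_pos ⟨hne' k 2 (by decide), w2.reachable⟩,
        if_pos ⟨hne' k 3 (by decide), w3.reachable⟩,
        if_pos ⟨hne' k 4 (by decide), a04.reachable⟩,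
        d1, d2, d3, d4, hfw, hfw, hfw, hfw]
      norm_num
      try ring
    rw [hpayC k, hpayG]
    ring
  · -- i = k + 1 : distances in G' from k+1
    have a12 : G'.Adj (k+1) ((k+1)+1) := by
      have := (hGo 1 2).2 (by decide)
      rwa [show k + 2 = (k+1)+1 from by ring] at this
    have a23 : G'.Adj ((k+1)+1) ((k+1)+2) := by
      have := (hGo 2 3).2 (by decide)
      rwa [show k + 2 = (k+1)+1 from by ring, show k + 3 = (k+1)+2 from by ring] at this
    have a34 : G'.Adj ((k+1)+2) ((k+1)+3) := by
      have := (hGo 3 4).2 (by decide)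
      rwa [show k + 3 = (k+1)+2 from by ring, show k + 4 = (k+1)+3 from by ring] at this
    have a40 : G'.Adj ((k+1)+3) ((k+1)+4) := by
      have := (hGo 4 0).2 (by decide)
      rwa [show k + 4 = (k+1)+3 from by ring,
        show k + 0 = (k+1)+4 from by
          rw [add_zero]
          have h5 : (1 : ZMod 5) + 4 = 0 := by decide
          calc k = k + ((1:ZMod 5)+4) := by rw [h5, add_zero]
            _ = (k+1)+4 := by ring] at this
    have w1' : G'.Walk (k+1) ((k+1)+1) := .cons a12 .nil
    have w2' : G'.Walk (k+1) ((k+1)+2) := .cons a12 (.cons a23 .nil)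
    have w3' : G'.Walk (k+1) ((k+1)+3) := .cons a12 (.cons a23 (.cons a34 .nil))
    have w4' : G'.Walk (k+1) ((k+1)+4) := .cons a12 (.cons a23 (.cons a34 (.cons a40 .nil)))
    have hpot : ∀ a b, G'.Adj a b → (b - (k+1)).val ≤ (a - (k+1)).val + 1 :=
      fun a b hab => decpot2 k a b (hGadjelim a b hab)
    have hlow : ∀ t : ZMod 5, G'.Reachable (k+1) ((k+1)+t) → t.val ≤ G'.dist (k+1) ((k+1)+t) := by
      intro t hr
      have := dist_ge_pot (fun x => (x - (k+1)).val) hpot hr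
      simpa [show (k+1)+t - (k+1) = t from by ring, show (k+1) - (k+1) = (0 : ZMod 5) from by ring]
        using this
    have d1 : G'.dist (k+1) ((k+1)+1) = 1 := SimpleGraph.dist_eq_one_iff_adj.mpr a12
    have d2 : G'.dist (k+1) ((k+1)+2) = 2 := by
      have hub : G'.dist (k+1) ((k+1)+2) ≤ 2 := by
        have hlen := SimpleGraph.dist_le (SimpleGraph.Walk.cons a12 (SimpleGraph.Walk.cons a23 SimpleGraph.Walk.nil))
        simp only [SimpleGraph.Walk.length_cons, SimpleGraph.Walk.length_nil] at hlen
        omega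
      have hlb := hlow 2 w2'.reachable
      have : ((2 : ZMod 5)).val = 2 := by decide
      omega
    have d3 : G'.dist (k+1) ((k+1)+3) = 3 := by
      have hub : G'.dist (k+1) ((k+1)+3) ≤ 3 := by
        have hlen := SimpleGraph.dist_le (SimpleGraph.Walk.cons a12 (SimpleGraph.Walk.cons a23 (SimpleGraph.Walk.cons a34 SimpleGraph.Walk.nil)))
        simp only [SimpleGraph.Walk.length_cons, SimpleGraph.Walk.length_nil] at hlen
        omega
      have hlb := hlow 3 w3'.reachable
      have : ((3 : ZMod 5)).val = 3 := by decide
      omega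
    have d4 : G'.dist (k+1) ((k+1)+4) = 4 := by
      have hub : G'.dist (k+1) ((k+1)+4) ≤ 4 := by
        have hlen := SimpleGraph.dist_le (SimpleGraph.Walk.cons a12 (SimpleGraph.Walk.cons a23 (SimpleGraph.Walk.cons a34 (SimpleGraph.Walk.cons a40 SimpleGraph.Walk.nil))))
        simp only [SimpleGraph.Walk.length_cons, SimpleGraph.Walk.length_nil] at hlen
        omega
      have hlb := hlow 4 w4'.reachable
      have : ((4 : ZMod 5)).val = 4 := by decide
      omega
    have hGk1 : ∀ j, G'.Adj (k+1) j ↔ j = (k+1) + 1 := by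
      intro j
      obtain ⟨y, rfl⟩ : ∃ y, j = (k+1) + y := ⟨j - (k+1), by ring⟩
      have h0 := hGo 1 (1+y)
      rw [show k + (1+y) = (k+1)+y from by ring] at h0
      rw [h0, add_right_inj]
      clear h0
      revert y; decide
    have hdegG : G'.degree (k+1) = 1 := by
      have h : G'.neighborFinset (k+1) = {(k+1)+1} := by
        ext j
        rw [SimpleGraph.mem_neighborFinset, hGk1 j, Finset.mem_singleton]
      rw [← SimpleGraph.card_neighborFinset_eq_degree, h, Finset.card_singleton]
    have hpayG : payoff G' f δ c (k+1) = w + δ*w + δ^2*w + δ^3*w - c := by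
      simp only [payoff]
      rw [sum_shift (k+1), (fun inst => by convert hdegG : ∀ inst, @SimpleGraph.degree _ G' (k+1) inst = 1)]
      rw [if_neg (by simp : ¬((k+1) + 0 ≠ (k+1) ∧ G'.Reachable (k+1) ((k+1)+0))),
        if_pos ⟨hne' (k+1) 1 (by decide), w1'.reachable⟩,
        if_pos ⟨hne' (k+1) 2 (by decide), w2'.reachable⟩,
        if_pos ⟨hne' (k+1) 3 (by decide), w3'.reachable⟩,
        if_pos ⟨hne' (k+1) 4 (by decide), w4'.reachable⟩,
        d1, d2, d3, d4, hfw, hfw, hfw, hfw]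
      norm_num
      try ring
    rw [hpayC (k+1), hpayG]
    ring

theorem fiveCycle_severanceProof_iff
    (C : SimpleGraph (ZMod 5))
    (hC : ∀ a b : ZMod 5, C.Adj a b ↔ a - b = 1 ∨ b - a = 1)
    (f : ZMod 5 → ℝ) (w : ℝ) (hw : 0 < w) (hfw : ∀ v, f v = w)
    (δ : ℝ) (hδ0 : 0 < δ) (hδ1 : δ < 1) (c : ℝ) (hc : 0 < c) :
    (∀ i : ZMod 5, ∀ e ∈ C.edgeSet, i ∈ e →
      payoff C f δ c i - payoff (C.deleteEdges {e}) f δ c i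
        = (1 + δ - δ ^ 2 - δ ^ 3) * w - c) ∧
    (SeveranceProof C f δ c ↔ (1 + δ - δ ^ 2 - δ ^ 3) * w ≥ c) := by
  have h1 : ∀ i : ZMod 5, ∀ e ∈ C.edgeSet, i ∈ e →
      payoff C f δ c i - payoff (C.deleteEdges {e}) f δ c i
        = (1 + δ - δ ^ 2 - δ ^ 3) * w - c := by
    intro i e he hie
    induction e using Sym2.ind with
    | _ a b =>
      rw [SimpleGraph.mem_edgeSet] at he
      rw [Sym2.mem_iff] at hie
      rcases (hC a b).1 he with h | h
      · -- a - b = 1, so a = b + 1, edge is s(b, b+1)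
        have ha : a = b + 1 := by
          have : a = b + (a - b) := by ring
          rw [h] at this; exact this
        subst ha
        rw [Sym2.eq_swap]
        rcases hie with rfl | rfl
        · exact diff_core C hC f w hfw δ c _ _ (Or.inr rfl)
        · exact diff_core C hC f w hfw δ c _ _ (Or.inl rfl)
      · -- b - a = 1, so b = a + 1
        have hb : b = a + 1 := by
          have : b = a + (b - a) := by ring
          rw [h] at this; exact this
        subst hb
        rcases hie with rfl | rfl
        · exact diff_core C hC f w hfw δ c _ _ (Or.inl rfl)
        · exact diff_core C hC f w hfw δ c _ _ (Or.inr rfl)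
  refine ⟨h1, ?_, ?_⟩
  · intro hsp
    have hadj : C.Adj 0 1 := (hC 0 1).2 (Or.inr (by decide))
    have he : s((0:ZMod 5), 1) ∈ C.edgeSet := hadj
    have hm : (0 : ZMod 5) ∈ s((0:ZMod 5), 1) := Sym2.mem_mk_left 0 1
    have h2 := hsp 0 _ he hm
    have h3 := h1 0 _ he hm
    linarith
  · intro hX i e he hm
    have h3 := h1 i e he hm
    have : payoff C f δ c i - payoff (C.deleteEdges {e}) f δ c i ≥ 0 := by
      rw [h3]; linarith
    linarith
end

section
/- Let P be the path graph on vertices v₁, v₂, …, v_N (N ≥ 2), with edges v_k v_{k+1} for k = 1, …, N−1, and suppose that for every k ∈ {1, …, N−1}, Σ_{l=1}^{k} f(v_l) > c and Σ_{l=k+1}^{N} f(v_l) > c. Then there exists δ₀ ∈ (0,1) such that for every decay factor δ ∈ (δ₀, 1), the path P is severance-proof. -/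
open scoped Classical

/-- The path graph is connected. -/
lemma aux_path_reach {N : ℕ} (P : SimpleGraph (Fin N))
    (hP : ∀ a b : Fin N, P.Adj a b ↔ (a.val + 1 = b.val ∨ b.val + 1 = a.val))
    (i j : Fin N) : P.Reachable i j := by
  have key : ∀ m (hm : m < N),
      P.Reachable ⟨0, Nat.lt_of_le_of_lt (Nat.zero_le m) hm⟩ ⟨m, hm⟩ := by
    intro m
    induction m with
    | zero => intro hm; exact SimpleGraph.Reachable.refl _
    | succ n ih =>
      intro hm
      have hadj : P.Adj ⟨n, by omega⟩ ⟨n + 1, hm⟩ := (hP _ _).2 (Or.inl rfl)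
      exact (ih (by omega)).trans hadj.reachable
  have hi := key i.1 i.2
  have hj := key j.1 j.2
  simp only [Fin.eta] at hi hj
  exact hi.symm.trans hj

/-- Deleting the edge `{a, a+1}` separates the two sides of the path. -/
lemma aux_path_sep {N : ℕ} (P : SimpleGraph (Fin N))
    (hP : ∀ a b : Fin N, P.Adj a b ↔ (a.val + 1 = b.val ∨ b.val + 1 = a.val))
    (a b : Fin N) (hab : a.val + 1 = b.val) :
    ∀ x y : Fin N, (P.deleteEdges {s(a, b)}).Reachable x y →
      (x.val < b.val ↔ y.val < b.val) := by
  have step : ∀ x z : Fin N, (P.deleteEdges {s(a, b)}).Adj x z →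
      (x.val < b.val ↔ z.val < b.val) := by
    intro x z hxz
    rw [SimpleGraph.deleteEdges_adj] at hxz
    obtain ⟨hadj, hne⟩ := hxz
    simp only [Set.mem_singleton_iff] at hne
    have h2 := (hP x z).1 hadj
    constructor
    · intro h3
      by_contra h4
      push_neg at h4
      have hx : x = a := Fin.ext (by omega)
      have hz : z = b := Fin.ext (by omega)
      exact hne (by rw [hx, hz])
    · intro h3
      by_contra h4
      push_neg at h4
      have hx : x = b := Fin.ext (by omega)
      have hz : z = a := Fin.ext (by omega)
      rw [hx, hz] at hne
      exact hne Sym2.eq_swap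
  rintro x y ⟨w⟩
  induction w with
  | nil => exact Iff.rfl
  | cons h p ih => exact (step _ _ h).trans ih

/-- Deleting an incident edge decreases the degree by one. -/
lemma aux_path_deg {N : ℕ} (P : SimpleGraph (Fin N)) (i j₀ : Fin N) (hadj : P.Adj i j₀) :
    (P.deleteEdges {s(i, j₀)}).degree i + 1 = P.degree i := by
  classical
  have hnb : (P.deleteEdges {s(i, j₀)}).neighborFinset i = (P.neighborFinset i).erase j₀ := by
    ext y
    simp only [SimpleGraph.mem_neighborFinset, SimpleGraph.deleteEdges_adj,
      Set.mem_singleton_iff, Finset.mem_erase]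
    constructor
    · rintro ⟨h1, h2⟩
      refine ⟨?_, h1⟩
      rintro rfl
      exact h2 rfl
    · rintro ⟨h1, h2⟩
      refine ⟨h2, ?_⟩
      intro h3
      rw [Sym2.eq_iff] at h3
      rcases h3 with ⟨-, rfl⟩ | ⟨rfl, rfl⟩
      · exact h1 rfl
      · exact hadj.ne rfl
  have hmem : j₀ ∈ P.neighborFinset i := (SimpleGraph.mem_neighborFinset _ _ _).2 hadj
  have hpos : 0 < (P.neighborFinset i).card := Finset.card_pos.2 ⟨j₀, hmem⟩
  unfold SimpleGraph.degree
  rw [hnb, Finset.card_erase_of_mem hmem]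
  omega

/-- At `δ = 1`, severing an edge of the path strictly decreases the payoff. -/
lemma aux_path_main {N : ℕ} (P : SimpleGraph (Fin N))
    (hP : ∀ a b : Fin N, P.Adj a b ↔ (a.val + 1 = b.val ∨ b.val + 1 = a.val))
    (f : Fin N → ℝ) (hf : ∀ v, 0 < f v) (c : ℝ)
    (hcut : ∀ k : ℕ, 0 < k → k < N →
      (∑ l ∈ Finset.univ.filter (fun l : Fin N => l.val < k), f l) > c ∧
      (∑ l ∈ Finset.univ.filter (fun l : Fin N => k ≤ l.val), f l) > c)
    (a b i : Fin N) (hab : a.val + 1 = b.val) (hi : i = a ∨ i = b) :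
    payoff (P.deleteEdges {s(a, b)}) f 1 c i < payoff P f 1 c i := by
  classical
  set G' := P.deleteEdges {s(a, b)} with hG'
  have hle : G' ≤ P := SimpleGraph.deleteEdges_le _
  have hbpos : 0 < b.val := by omega
  have hadj : P.Adj a b := (hP a b).2 (Or.inl hab)
  have hsep := aux_path_sep P hP a b hab
  have hreach := aux_path_reach P hP
  -- degree relation
  have hdeg : G'.degree i + 1 = P.degree i := by
    rcases hi with rfl | rfl
    · exact aux_path_deg P i b hadj
    · have h := aux_path_deg P i a hadj.symm
      rwa [show s(i, a) = s(a, i) from Sym2.eq_swap] at h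
  -- the set on the other side of the cut
  set S : Finset (Fin N) :=
    if i = a then Finset.univ.filter (fun l : Fin N => b.val ≤ l.val)
    else Finset.univ.filter (fun l : Fin N => l.val < b.val) with hSdef
  have hSc : c < ∑ l ∈ S, f l := by
    rcases hi with rfl | rfl
    · rw [hSdef, if_pos rfl]
      exact (hcut b.val hbpos b.isLt).2
    · have hib : ¬ (i = a) := by
        intro h
        rw [h] at hab
        omega
      rw [hSdef, if_neg hib]
      exact (hcut _ hbpos (Fin.is_lt _)).1
  have hiside : ∀ j ∈ S, j ≠ i := by
    intro j hj
    rcases hi with rfl | rfl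
    · rw [hSdef, if_pos rfl, Finset.mem_filter] at hj
      intro h; rw [h] at hj; omega
    · have hib : ¬ (i = a) := by
        intro h; rw [h] at hab; omega
      rw [hSdef, if_neg hib, Finset.mem_filter] at hj
      intro h; rw [h] at hj; omega
  have hnotreach : ∀ j ∈ S, ¬ G'.Reachable i j := by
    intro j hj hr
    have h2 := hsep i j hr
    rcases hi with rfl | rfl
    · rw [hSdef, if_pos rfl, Finset.mem_filter] at hj
      have h3 : i.val < b.val := by omega
      have := h2.1 h3
      omega
    · have hib : ¬ (i = a) := by
        intro h; rw [h] at hab; omega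
      rw [hSdef, if_neg hib, Finset.mem_filter] at hj
      have := h2.2 hj.2
      omega
  -- sum comparison
  have hnonneg : ∀ j : Fin N,
      (if j ≠ i ∧ G'.Reachable i j then f j else 0)
        ≤ (if j ≠ i ∧ P.Reachable i j then f j else 0) := by
    intro j
    by_cases h : j ≠ i ∧ G'.Reachable i j
    · rw [if_pos h, if_pos ⟨h.1, h.2.mono hle⟩]
    · rw [if_neg h]
      by_cases h2 : j ≠ i ∧ P.Reachable i j
      · rw [if_pos h2]; exact (hf j).le
      · rw [if_neg h2]
  have hkey : ∀ j ∈ S, f j ≤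
      (if j ≠ i ∧ P.Reachable i j then f j else 0)
        - (if j ≠ i ∧ G'.Reachable i j then f j else 0) := by
    intro j hj
    rw [if_pos ⟨hiside j hj, hreach i j⟩,
      if_neg (fun h => hnotreach j hj h.2)]
    simp
  have hsum : c < (∑ j : Fin N, if j ≠ i ∧ P.Reachable i j then f j else 0)
      - (∑ j : Fin N, if j ≠ i ∧ G'.Reachable i j then f j else 0) := by
    rw [← Finset.sum_sub_distrib]
    calc c < ∑ l ∈ S, f l := hSc
      _ ≤ ∑ j ∈ S, ((if j ≠ i ∧ P.Reachable i j then f j else 0)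
            - (if j ≠ i ∧ G'.Reachable i j then f j else 0)) :=
          Finset.sum_le_sum hkey
      _ ≤ ∑ j : Fin N, ((if j ≠ i ∧ P.Reachable i j then f j else 0)
            - (if j ≠ i ∧ G'.Reachable i j then f j else 0)) :=
          Finset.sum_le_sum_of_subset_of_nonneg (Finset.subset_univ S)
            (fun j _ _ => sub_nonneg.2 (hnonneg j))
  have hdR : (P.degree i : ℝ) = (G'.degree i : ℝ) + 1 := by
    exact_mod_cast hdeg.symm
  have hmul : c * ((G'.degree i : ℝ) + 1) = c * (G'.degree i : ℝ) + c := by ring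
  simp only [payoff, one_pow, one_mul]
  rw [hdR, hmul]
  have h4 : (∑ j : Fin N, if j ≠ i ∧ G'.Reachable i j then f j else 0) - c * (G'.degree i : ℝ)
      < (∑ j : Fin N, if j ≠ i ∧ P.Reachable i j then f j else 0) - (c * (G'.degree i : ℝ) + c) := by
    linarith [hsum]
  convert h4

/-- Continuity of the payoff in the decay factor. -/
lemma aux_payoff_cont {V : Type*} [Fintype V] (G : SimpleGraph V)
    (f : V → ℝ) (c : ℝ) (i : V) :
    Continuous fun δ : ℝ => payoff G f δ c i := by
  unfold payoff
  apply Continuous.sub _ continuous_const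
  apply continuous_finset_sum
  intro j _
  by_cases h : j ≠ i ∧ G.Reachable i j
  · simp only [if_pos h]
    exact (continuous_pow _).mul continuous_const
  · simp only [if_neg h]
    exact continuous_const

/-- From positivity at 1 and continuity, positivity on an interval `(1-ε, 1)`. -/
lemma aux_eventually (g : ℝ → ℝ) (hg : Continuous g) (h1 : 0 < g 1) :
    ∃ ε : ℝ, 0 < ε ∧ ∀ δ : ℝ, 1 - ε < δ → δ < 1 → 0 < g δ := by
  have h2 : ∀ᶠ δ in nhds (1 : ℝ), 0 < g δ :=
    (hg.tendsto 1).eventually (eventually_gt_nhds h1)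
  rw [Metric.eventually_nhds_iff] at h2
  obtain ⟨ε, hε, h3⟩ := h2
  refine ⟨ε, hε, fun δ hδ1 hδ2 => h3 ?_⟩
  rw [Real.dist_eq, abs_lt]
  constructor <;> linarith

/-- The path graph on `Fin N` (vertices `0, 1, …, N-1`, edges between consecutive
vertices) is severance-proof for all `δ` close enough to `1`, provided that for
every edge the total value on each side of the edge exceeds the link cost `c`. -/
theorem path_severanceProof_for_delta_close_to_one
    (N : ℕ) (hN : 2 ≤ N) (P : SimpleGraph (Fin N))
    (hP : ∀ a b : Fin N, P.Adj a b ↔ (a.val + 1 = b.val ∨ b.val + 1 = a.val))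
    (f : Fin N → ℝ) (hf : ∀ v, 0 < f v) (c : ℝ) (hc : 0 < c)
    (hcut : ∀ k : ℕ, 0 < k → k < N →
      (∑ l ∈ Finset.univ.filter (fun l : Fin N => l.val < k), f l) > c ∧
      (∑ l ∈ Finset.univ.filter (fun l : Fin N => k ≤ l.val), f l) > c) :
    ∃ δ₀ : ℝ, 0 < δ₀ ∧ δ₀ < 1 ∧
      ∀ δ : ℝ, δ₀ < δ → δ < 1 → SeveranceProof P f δ c := by
  classical
  have main : ∀ p : Fin N × Sym2 (Fin N), ∃ ε : ℝ, 0 < ε ∧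
      ∀ δ : ℝ, 1 - ε < δ → δ < 1 → p.2 ∈ P.edgeSet → p.1 ∈ p.2 →
        payoff P f δ c p.1 ≥ payoff (P.deleteEdges {p.2}) f δ c p.1 := by
    rintro ⟨i, e⟩
    induction e using Sym2.ind with
    | _ x y =>
      by_cases hxy : P.Adj x y ∧ (i = x ∨ i = y)
      · obtain ⟨hadj, hi⟩ := hxy
        have hlt : payoff (P.deleteEdges {s(x, y)}) f 1 c i < payoff P f 1 c i := by
          rcases (hP x y).1 hadj with h | h
          · exact aux_path_main P hP f hf c hcut x y i h hi
          · have := aux_path_main P hP f hf c hcut y x i h (hi.symm)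
            rwa [show s(y, x) = s(x, y) from Sym2.eq_swap] at this
        obtain ⟨ε, hε, hε2⟩ := aux_eventually
          (fun δ => payoff P f δ c i - payoff (P.deleteEdges {s(x, y)}) f δ c i)
          (((aux_payoff_cont P f c i)).sub (aux_payoff_cont _ f c i))
          (by simpa using sub_pos.2 hlt)
        refine ⟨ε, hε, fun δ h1 h2 _ _ => ?_⟩
        have := hε2 δ h1 h2
        linarith
      · refine ⟨1/2, by norm_num, fun δ _ _ h1 h2 => absurd ?_ hxy⟩
        exact ⟨(SimpleGraph.mem_edgeSet P).1 h1, Sym2.mem_iff.1 h2⟩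
  choose ε hε hgood using main
  have hv : Fin N := ⟨0, by omega⟩
  have hne : (Finset.univ : Finset (Fin N × Sym2 (Fin N))).Nonempty :=
    ⟨(hv, s(hv, hv)), Finset.mem_univ _⟩
  set εm := Finset.univ.inf' hne ε with hεm_def
  have hεm : 0 < εm := (Finset.lt_inf'_iff hne).2 (fun p _ => hε p)
  refine ⟨max (1 - εm) (1 / 2),
    lt_of_lt_of_le (by norm_num) (le_max_right _ _),
    max_lt (by linarith) (by norm_num), ?_⟩
  intro δ hδ0 hδ1
  intro i e he hie
  have h2 : εm ≤ ε (i, e) := Finset.inf'_le _ (Finset.mem_univ _)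
  have h3 : 1 - εm ≤ max (1 - εm) (1 / 2) := le_max_left _ _
  exact hgood (i, e) δ (by linarith) hδ1 he hie
end

section
/- Let C be the cycle graph on a finite vertex set V with |V| = N ≥ 3, and suppose some vertex i satisfies f(i) ≥ c. If C is severance-proof, then both neighbors of i in C have strictly positive payoff, every vertex has nonnegative payoff, and hence the social welfare Σ_{w ∈ V} u_w(C) is strictly positive. -/
open scoped Classical

section CycleAux

open SimpleGraph

variable {N : ℕ} [NeZero N] {C : SimpleGraph (ZMod N)}

/-- A forward walk of length `k` from `w` to `w + k` in the cycle graph, whose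
edges are exactly the "forward" edges `s(w+t, w+t+1)` for `t < k`. -/
private lemma fwd_walk (hC : ∀ a b : ZMod N, C.Adj a b ↔ a - b = 1 ∨ b - a = 1) (k : ℕ) :
    ∀ w : ZMod N, ∃ p : C.Walk w (w + (k : ZMod N)), p.length = k ∧
      ∀ e ∈ p.edges, ∃ t : ℕ, t < k ∧ e = s(w + (t : ZMod N), w + (t : ZMod N) + 1) := by
  induction k with
  | zero =>
    intro w
    exact ⟨(SimpleGraph.Walk.nil : C.Walk w w).copy rfl (by push_cast; ring), by simp, by simp⟩
  | succ k ih =>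
    intro w
    obtain ⟨p, hlen, hedges⟩ := ih (w + 1)
    have hadj : C.Adj w (w + 1) := (hC _ _).2 (Or.inr (by ring))
    refine ⟨(SimpleGraph.Walk.cons hadj p).copy rfl (by push_cast; ring), by simp [hlen], ?_⟩
    intro e he
    rw [SimpleGraph.Walk.edges_copy, SimpleGraph.Walk.edges_cons] at he
    rcases List.mem_cons.mp he with rfl | h
    · exact ⟨0, Nat.succ_pos k, by push_cast; ring_nf⟩
    · obtain ⟨t, ht, rfl⟩ := hedges _ h
      refine ⟨t + 1, by omega, ?_⟩
      have h1 : w + 1 + (t : ZMod N) = w + ((t + 1 : ℕ) : ZMod N) := by push_cast; ring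
      rw [h1]

/-- A backward walk of length `k` from `w` to `w - k` in the cycle graph, whose
edges are exactly the "backward" edges `s(w-t, w-t-1)` for `t < k`. -/
private lemma bwd_walk (hC : ∀ a b : ZMod N, C.Adj a b ↔ a - b = 1 ∨ b - a = 1) (k : ℕ) :
    ∀ w : ZMod N, ∃ p : C.Walk w (w - (k : ZMod N)), p.length = k ∧
      ∀ e ∈ p.edges, ∃ t : ℕ, t < k ∧ e = s(w - (t : ZMod N), w - (t : ZMod N) - 1) := by
  induction k with
  | zero =>
    intro w
    exact ⟨(SimpleGraph.Walk.nil : C.Walk w w).copy rfl (by push_cast; ring), by simp, by simp⟩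
  | succ k ih =>
    intro w
    obtain ⟨p, hlen, hedges⟩ := ih (w - 1)
    have hadj : C.Adj w (w - 1) := (hC _ _).2 (Or.inl (by ring))
    refine ⟨(SimpleGraph.Walk.cons hadj p).copy rfl (by push_cast; ring), by simp [hlen], ?_⟩
    intro e he
    rw [SimpleGraph.Walk.edges_copy, SimpleGraph.Walk.edges_cons] at he
    rcases List.mem_cons.mp he with rfl | h
    · exact ⟨0, Nat.succ_pos k, by push_cast; ring_nf⟩
    · obtain ⟨t, ht, rfl⟩ := hedges _ h
      refine ⟨t + 1, by omega, ?_⟩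
      have h1 : w - 1 - (t : ZMod N) = w - ((t + 1 : ℕ) : ZMod N) := by push_cast; ring
      rw [h1]

/-- Main auxiliary result: in a severance-proof cycle network with all values
positive, EVERY agent's payoff is strictly positive. -/
private lemma cycle_payoff_pos (N : ℕ) (hN : 3 ≤ N) [NeZero N] (C : SimpleGraph (ZMod N))
    (hC : ∀ a b : ZMod N, C.Adj a b ↔ a - b = 1 ∨ b - a = 1)
    (f : ZMod N → ℝ) (hf : ∀ v, 0 < f v) (δ : ℝ) (hδ0 : 0 < δ) (hδ1 : δ < 1)
    (c : ℝ) (hstable : SeveranceProof C f δ c) (w : ZMod N) :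
    0 < payoff C f δ c w := by
  -- basic arithmetic facts in `ZMod N`
  have h1 : (1 : ZMod N) ≠ 0 := by
    have : ((1 : ℕ) : ZMod N) ≠ 0 := by
      rw [Ne, ZMod.natCast_eq_zero_iff]
      intro h; have := Nat.le_of_dvd one_pos h; omega
    simpa using this
  have h2 : (2 : ZMod N) ≠ 0 := by
    have : ((2 : ℕ) : ZMod N) ≠ 0 := by
      rw [Ne, ZMod.natCast_eq_zero_iff]
      intro h; have := Nat.le_of_dvd two_pos h; omega
    simpa using this
  have hcast : ∀ t : ℕ, t < N → (t : ZMod N) = 0 → t = 0 := by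
    intro t ht h
    rw [ZMod.natCast_eq_zero_iff] at h
    by_contra ht0
    exact absurd (Nat.le_of_dvd (Nat.pos_of_ne_zero ht0) h) (by omega)
  have hp1 : ∀ v : ZMod N, v + 1 ≠ v := fun v h => h1 (by linear_combination h)
  have hm1 : ∀ v : ZMod N, v - 1 ≠ v := fun v h => h1 (by linear_combination -h)
  have hpm : ∀ v : ZMod N, v + 1 ≠ v - 1 := fun v h => h2 (by linear_combination h)
  have hAdjIff : ∀ a b : ZMod N, C.Adj a b ↔ b = a - 1 ∨ b = a + 1 := by
    intro a b; rw [hC]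
    constructor
    · rintro (h | h)
      · left; linear_combination -h
      · right; linear_combination h
    · rintro (rfl | rfl)
      · left; ring
      · right; ring
  have hedge_neA : ∀ a : ZMod N, a ≠ w + 1 → s(w, a) ≠ s(w, w + 1) := by
    intro a ha h
    rw [Sym2.eq_iff] at h
    rcases h with ⟨-, h⟩ | ⟨h, -⟩
    · exact ha h
    · exact hp1 w h.symm
  have hedge_neB : ∀ a : ZMod N, a ≠ w - 1 → s(w, a) ≠ s(w, w - 1) := by
    intro a ha h
    rw [Sym2.eq_iff] at h
    rcases h with ⟨-, h⟩ | ⟨h, -⟩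
    · exact ha h
    · exact hm1 w h.symm
  -- degrees
  have hdegC : C.degree w = 2 := by
    have hset : C.neighborFinset w = {w - 1, w + 1} := by
      ext a
      simp only [SimpleGraph.mem_neighborFinset, hAdjIff, Finset.mem_insert,
        Finset.mem_singleton]
    rw [← SimpleGraph.card_neighborFinset_eq_degree, hset,
      Finset.card_insert_of_notMem (by simpa using fun h => hpm w h.symm),
      Finset.card_singleton]
  set PA := C.deleteEdges {s(w, w + 1)} with hPAdef
  set PB := C.deleteEdges {s(w, w - 1)} with hPBdef
  have hdegA : PA.degree w = 1 := by
    have hset : PA.neighborFinset w = {w - 1} := by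
      ext a
      simp only [SimpleGraph.mem_neighborFinset, hPAdef, SimpleGraph.deleteEdges_adj,
        Set.mem_singleton_iff, Finset.mem_singleton, hAdjIff]
      constructor
      · rintro ⟨h | h, hne⟩
        · exact h
        · exact absurd (by rw [h]) hne
      · rintro rfl
        exact ⟨Or.inl rfl, hedge_neA _ fun h => hpm w h.symm⟩
    rw [← SimpleGraph.card_neighborFinset_eq_degree, hset, Finset.card_singleton]
  have hdegB : PB.degree w = 1 := by
    have hset : PB.neighborFinset w = {w + 1} := by
      ext a
      simp only [SimpleGraph.mem_neighborFinset, hPBdef, SimpleGraph.deleteEdges_adj,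
        Set.mem_singleton_iff, Finset.mem_singleton, hAdjIff]
      constructor
      · rintro ⟨h | h, hne⟩
        · exact absurd (by rw [h]) hne
        · exact h
      · rintro rfl
        exact ⟨Or.inr rfl, hedge_neB _ (hpm w)⟩
    rw [← SimpleGraph.card_neighborFinset_eq_degree, hset, Finset.card_singleton]
  -- reachability
  have hreach : ∀ j : ZMod N, C.Reachable w j := by
    intro j
    obtain ⟨p, -, -⟩ := fwd_walk hC (j - w).val w
    have heq : w + (((j - w).val : ℕ) : ZMod N) = j := by
      rw [ZMod.natCast_val, ZMod.cast_id]; ring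
    exact ⟨p.copy rfl heq⟩
  have hreachPB : ∀ j : ZMod N, j ≠ w → PB.Reachable w j := by
    intro j hj
    have hk0 : (j - w).val ≠ 0 := by
      rw [Ne, ZMod.val_eq_zero, sub_eq_zero]; exact hj
    have hkN : (j - w).val < N := ZMod.val_lt _
    obtain ⟨p, hlen, hedges⟩ := fwd_walk hC (j - w).val w
    have heq : w + (((j - w).val : ℕ) : ZMod N) = j := by
      rw [ZMod.natCast_val, ZMod.cast_id]; ring
    have havoid : ∀ e ∈ p.edges, e ∉ ({s(w, w - 1)} : Set (Sym2 (ZMod N))) := by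
      intro e he
      obtain ⟨t, ht, rfl⟩ := hedges _ he
      rw [Set.mem_singleton_iff, Sym2.eq_iff]
      push_neg
      constructor
      · intro hA hB
        exact h2 (by linear_combination hB - hA)
      · intro _ hB
        have hcast0 : ((t + 1 : ℕ) : ZMod N) = 0 := by push_cast; linear_combination hB
        have := hcast (t + 1) (by omega) hcast0
        omega
    exact ⟨(p.toDeleteEdges _ havoid).copy rfl heq⟩
  have hreachPA : ∀ j : ZMod N, j ≠ w → PA.Reachable w j := by
    intro j hj
    have hk0 : (j - w).val ≠ 0 := by
      rw [Ne, ZMod.val_eq_zero, sub_eq_zero]; exact hj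
    have hkN : (j - w).val < N := ZMod.val_lt _
    obtain ⟨p, hlen, hedges⟩ := bwd_walk hC (N - (j - w).val) w
    have heq : w - (((N - (j - w).val : ℕ)) : ZMod N) = j := by
      rw [Nat.cast_sub hkN.le, ZMod.natCast_self, ZMod.natCast_val, ZMod.cast_id]; ring
    have havoid : ∀ e ∈ p.edges, e ∉ ({s(w, w + 1)} : Set (Sym2 (ZMod N))) := by
      intro e he
      obtain ⟨t, ht, rfl⟩ := hedges _ he
      rw [Set.mem_singleton_iff, Sym2.eq_iff]
      push_neg
      constructor
      · intro hA hB
        exact h2 (by linear_combination hA - hB)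
      · intro _ hB
        have hcast0 : ((t + 1 : ℕ) : ZMod N) = 0 := by push_cast; linear_combination -hB
        have := hcast (t + 1) (by omega) hcast0
        omega
    exact ⟨(p.toDeleteEdges _ havoid).copy rfl heq⟩
  -- a shortest path from `w` uses only one of the two edges at `w`
  have hsplit : ∀ j : ZMod N, j ≠ w →
      PA.dist w j ≤ C.dist w j ∨ PB.dist w j ≤ C.dist w j := by
    intro j hj
    obtain ⟨p, hpath, hlen⟩ := (hreach j).exists_path_of_dist
    cases p with
    | nil => exact absurd rfl hj
    | @cons _ x _ hadj q =>
      rw [SimpleGraph.Walk.cons_isPath_iff] at hpath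
      obtain ⟨hqpath, hwsupp⟩ := hpath
      have hqedges : ∀ a b : ZMod N, s(a, b) ∈ q.edges → w ≠ a ∧ w ≠ b := by
        intro a b he
        exact ⟨fun h => hwsupp (by rw [h]; exact q.fst_mem_support_of_mem_edges he),
               fun h => hwsupp (by rw [h]; exact q.snd_mem_support_of_mem_edges he)⟩
      rcases (hAdjIff w x).1 hadj with rfl | rfl
      · -- first edge is s(w, w-1): the path avoids s(w, w+1)
        left
        have havoid : ∀ e ∈ (SimpleGraph.Walk.cons hadj q).edges,
            e ∉ ({s(w, w + 1)} : Set (Sym2 (ZMod N))) := by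
          intro e he
          rw [SimpleGraph.Walk.edges_cons] at he
          rw [Set.mem_singleton_iff]
          rcases List.mem_cons.mp he with rfl | he'
          · exact hedge_neA _ fun h => hpm w h.symm
          · rintro rfl
            exact (hqedges w (w + 1) he').1 rfl
        have hle := SimpleGraph.dist_le
          ((SimpleGraph.Walk.cons hadj q).toDeleteEdges {s(w, w + 1)} havoid)
        rwa [SimpleGraph.Walk.length_transfer, hlen] at hle
      · -- first edge is s(w, w+1): the path avoids s(w, w-1)
        right
        have havoid : ∀ e ∈ (SimpleGraph.Walk.cons hadj q).edges,
            e ∉ ({s(w, w - 1)} : Set (Sym2 (ZMod N))) := by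
          intro e he
          rw [SimpleGraph.Walk.edges_cons] at he
          rw [Set.mem_singleton_iff]
          rcases List.mem_cons.mp he with rfl | he'
          · exact hedge_neB _ (hpm w)
          · rintro rfl
            exact (hqedges w (w - 1) he').1 rfl
        have hle := SimpleGraph.dist_le
          ((SimpleGraph.Walk.cons hadj q).toDeleteEdges {s(w, w - 1)} havoid)
        rwa [SimpleGraph.Walk.length_transfer, hlen] at hle
  -- severance-proofness at the two edges of `w`
  have hsA : payoff C f δ c w ≥ payoff PA f δ c w :=
    hstable w s(w, w + 1) ((C.mem_edgeSet).mpr ((hAdjIff w _).2 (Or.inr rfl)))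
      (Sym2.mem_mk_left _ _)
  have hsB : payoff C f δ c w ≥ payoff PB f δ c w :=
    hstable w s(w, w - 1) ((C.mem_edgeSet).mpr ((hAdjIff w _).2 (Or.inl rfl)))
      (Sym2.mem_mk_left _ _)
  -- rewrite the three payoffs
  have epay : payoff C f δ c w =
      (∑ j : ZMod N, if j ≠ w ∧ C.Reachable w j then δ ^ (C.dist w j - 1) * f j else 0)
        - 2 * c := by
    simp only [payoff, hdegC]; push_cast; ring
  have epayA : payoff PA f δ c w =
      (∑ j : ZMod N, if j ≠ w ∧ PA.Reachable w j then δ ^ (PA.dist w j - 1) * f j else 0)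
        - c := by
    simp only [payoff]
    have hd : ∀ inst, @SimpleGraph.degree _ PA w inst = 1 := fun inst => by convert hdegA
    simp only [hd]; push_cast; ring
  have epayB : payoff PB f δ c w =
      (∑ j : ZMod N, if j ≠ w ∧ PB.Reachable w j then δ ^ (PB.dist w j - 1) * f j else 0)
        - c := by
    simp only [payoff]
    have hd : ∀ inst, @SimpleGraph.degree _ PB w inst = 1 := fun inst => by convert hdegB
    simp only [hd]; push_cast; ring
  -- pointwise strict inequality
  have hterm : ∀ j : ZMod N, j ≠ w →
      (if j ≠ w ∧ C.Reachable w j then δ ^ (C.dist w j - 1) * f j else 0)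
      < (if j ≠ w ∧ PA.Reachable w j then δ ^ (PA.dist w j - 1) * f j else 0)
      + (if j ≠ w ∧ PB.Reachable w j then δ ^ (PB.dist w j - 1) * f j else 0) := by
    intro j hj
    rw [if_pos ⟨hj, hreach j⟩, if_pos ⟨hj, hreachPA j hj⟩, if_pos ⟨hj, hreachPB j hj⟩]
    have hBA : 0 < δ ^ (PA.dist w j - 1) * f j := mul_pos (pow_pos hδ0 _) (hf j)
    have hBB : 0 < δ ^ (PB.dist w j - 1) * f j := mul_pos (pow_pos hδ0 _) (hf j)
    rcases hsplit j hj with h | h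
    · have hpow : δ ^ (C.dist w j - 1) ≤ δ ^ (PA.dist w j - 1) :=
        pow_le_pow_of_le_one hδ0.le hδ1.le (by omega)
      have := mul_le_mul_of_nonneg_right hpow (hf j).le
      linarith
    · have hpow : δ ^ (C.dist w j - 1) ≤ δ ^ (PB.dist w j - 1) :=
        pow_le_pow_of_le_one hδ0.le hδ1.le (by omega)
      have := mul_le_mul_of_nonneg_right hpow (hf j).le
      linarith
  -- sum the pointwise inequalities
  have hkey : (∑ j : ZMod N, if j ≠ w ∧ C.Reachable w j then δ ^ (C.dist w j - 1) * f j else 0)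
      < (∑ j : ZMod N, if j ≠ w ∧ PA.Reachable w j then δ ^ (PA.dist w j - 1) * f j else 0)
      + (∑ j : ZMod N, if j ≠ w ∧ PB.Reachable w j then δ ^ (PB.dist w j - 1) * f j else 0) := by
    rw [← Finset.sum_add_distrib]
    apply Finset.sum_lt_sum
    · intro j _
      by_cases hj : j = w
      · subst hj; simp
      · exact (hterm j hj).le
    · exact ⟨w + 1, Finset.mem_univ _, hterm (w + 1) (hp1 w)⟩
  rw [epayA] at hsA
  rw [epayB] at hsB
  rw [epay] at hsA hsB ⊢
  linarith

end CycleAux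

/-- In a severance-proof cycle (wheel) network containing a medium- or high-value
agent `i` (`f i ≥ c`), both neighbors of `i` earn strictly positive payoffs, every
agent earns a nonnegative payoff, and social welfare is strictly positive. -/
theorem cycle_with_highValue_positive_welfare
    (N : ℕ) (hN : 3 ≤ N) [NeZero N] (C : SimpleGraph (ZMod N))
    (hC : ∀ a b : ZMod N, C.Adj a b ↔ a - b = 1 ∨ b - a = 1)
    (f : ZMod N → ℝ) (hf : ∀ v, 0 < f v) (δ : ℝ) (hδ0 : 0 < δ) (hδ1 : δ < 1)
    (c : ℝ) (hc : 0 < c)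
    (i : ZMod N) (hi : f i ≥ c)
    (hstable : SeveranceProof C f δ c) :
    payoff C f δ c (i + 1) > 0 ∧ payoff C f δ c (i - 1) > 0 ∧
      (∀ w : ZMod N, payoff C f δ c w ≥ 0) ∧
      (∑ w : ZMod N, payoff C f δ c w) > 0 := by
  have key : ∀ w : ZMod N, 0 < payoff C f δ c w :=
    cycle_payoff_pos N hN C hC f hf δ hδ0 hδ1 c hstable
  exact ⟨key _, key _, fun w => (key w).le,
    Finset.sum_pos (fun w _ => key w) ⟨0, Finset.mem_univ _⟩⟩
end
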